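/- arXiv:2106.14314 — 11 statements merged into one kernel-verified Lean document; each statement's English description precedes it below -/
import Mathlib

section
/- For k > 0, β_k(P_n) = 1 if n = 1; β_k(P_n) = 2m if n mod (3k+2) ∈ {0,1}; β_k(P_n) = 2m+1 if n mod (3k+2) ∈ {2,...,k+2}; and β_k(P_n) = 2m+2 if n mod (3k+2) ∈ {k+3,...,3k+1}, where m = ⌊n/(3k+2)⌋. -/
set_option maxHeartbeats 1000000

/-- Geodesic distance on the path `P_n` with vertices `v_1, …, v_n`
(indexed by `Fin n`): `d(v_i, v_j) = |i - j|`. -/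
def pathDist {n : ℕ} (u v : Fin n) : ℕ := max u.val v.val - min u.val v.val

/-- `R` is a `k`-truncated resolving set of the path `P_n`. -/
def IsPathTruncResolving (n k : ℕ) (R : Finset (Fin n)) : Prop :=
  R.Nonempty ∧ ∀ u v : Fin n,
    (∀ r ∈ R, min (pathDist u r) (k + 1) = min (pathDist v r) (k + 1)) → u = v

/-- The `k`-truncated metric dimension of the path `P_n`. -/
noncomputable def pathTruncDim (n k : ℕ) : ℕ :=
  sInf {m | ∃ R : Finset (Fin n), IsPathTruncResolving n k R ∧ R.card = m}


def td (k a b : ℕ) : ℕ := min (a - b + (b - a)) (k + 1)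

def NatResolves (k N : ℕ) (S : Finset ℕ) : Prop :=
  ∀ u v : ℕ, u < N → v < N → (∀ r ∈ S, td k u r = td k v r) → u = v

def F (k n : ℕ) : ℕ :=
  if n = 1 then 1
  else if n % (3 * k + 2) = 0 ∨ n % (3 * k + 2) = 1 then 2 * (n / (3 * k + 2))
  else if n % (3 * k + 2) ≤ k + 2 then 2 * (n / (3 * k + 2)) + 1
  else 2 * (n / (3 * k + 2)) + 2

def g0 (k : ℕ) : ℕ → ℕ
  | 0 => 0
  | 1 => k + 1
  | (t+2) => g0 k t + (3 * k + 2)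

lemma g0_succ (k t : ℕ) : g0 k t + (k + 1) ≤ g0 k (t + 1) := by
  induction t using Nat.strong_induction_on with
  | _ t ih =>
    match t with
    | 0 => simp [g0]
    | 1 => simp [g0]; omega
    | (t+2) =>
      have := ih t (by omega)
      show g0 k t + (3*k+2) + (k+1) ≤ g0 k (t+1) + (3*k+2)
      omega

lemma resolves_single (k L : ℕ) (hL : L ≤ k + 2) : NatResolves k L {0} := by
  intro u v hu hv h
  have := h 0 (Finset.mem_singleton_self 0)
  simp only [td] at this; omega

lemma resolves_ends (k L : ℕ) (h2 : 2 ≤ L) (hL : L ≤ 2*k + 2) :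
    NatResolves k L {0, L - 1} := by
  intro u v hu hv h
  have h0 := h 0 (by simp)
  have h1 := h (L-1) (by simp)
  simp only [td] at h0 h1; omega

lemma resolves_inner (k t L : ℕ) (ht1 : 1 ≤ t) (ht2 : t ≤ k + 1) (hL : L ≤ 2*k + t + 2) :
    NatResolves k L {k, k + t} := by
  intro u v hu hv h
  have h0 := h k (by simp)
  have h1 := h (k+t) (by simp)
  simp only [td] at h0 h1; omega

lemma resolves_step (k N' : ℕ) (hk : 1 ≤ k) (S' : Finset ℕ) (h : NatResolves k N' S') :
    NatResolves k (N' + (3*k+2)) ({k, 2*k+1} ∪ S'.image (· + (3*k+2))) := by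
  intro u v hu hv hall
  have hbk := hall k (by simp)
  have hb2 := hall (2*k+1) (by simp)
  by_cases hu' : u < 3*k+2 <;> by_cases hv' : v < 3*k+2
  · have h21 : 2*k+1 = k + (k+1) := by omega
    rw [h21] at hb2
    exact resolves_inner k (k+1) (3*k+2) (by omega) le_rfl (by omega) u v hu' hv'
      (by intro r hr; simp at hr; rcases hr with rfl | rfl; exact hbk; exact hb2)
  · exfalso; simp only [td] at hbk hb2; omega
  · exfalso; simp only [td] at hbk hb2; omega
  · have hu2 : u - (3*k+2) < N' := by omega
    have hv2 : v - (3*k+2) < N' := by omega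
    have key : ∀ r ∈ S', td k (u - (3*k+2)) r = td k (v - (3*k+2)) r := by
      intro r hr
      have := hall (r + (3*k+2))
        (Finset.mem_union_right _ (Finset.mem_image_of_mem _ hr))
      simp only [td] at this ⊢
      omega
    have := h (u - (3*k+2)) (v - (3*k+2)) hu2 hv2 key
    omega

def nfSet (k N : ℕ) (S : Finset ℕ) : Finset ℕ :=
  (S.biUnion (fun r => Finset.Icc (r - k) (r + k))) ∩ Finset.range N

lemma mem_nfSet {k N : ℕ} {S : Finset ℕ} {v : ℕ} :
    v ∈ nfSet k N S ↔ (∃ r ∈ S, r - k ≤ v ∧ v ≤ r + k) ∧ v < N := by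
  simp [nfSet, Finset.mem_biUnion, Finset.mem_Icc, Finset.mem_range, Finset.mem_inter]

lemma nf_card (k : ℕ) (hk : 1 ≤ k) :
    ∀ t (S : Finset ℕ) (N : ℕ), S.card = t → NatResolves k N S →
      (nfSet k N S).card ≤ g0 k t := by
  intro t
  induction t using Nat.strong_induction_on with
  | _ t ih =>
  intro S N hcard hres
  match t, hcard with
  | 0, hcard =>
      have : S = ∅ := Finset.card_eq_zero.mp hcard
      subst this; simp [nfSet, g0]
  | (t+1), hcard =>
  have hSne : S.Nonempty := Finset.card_pos.mp (by omega)
  set M := S.max' hSne with hMdef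
  have hMS : M ∈ S := S.max'_mem hSne
  by_cases hA : N ≤ M + 1
  · -- case A: peel the max landmark
    set S' := S.erase M with hS'
    set N' := min N (M - k) with hN'
    have hres' : NatResolves k N' S' := by
      intro u v hu hv hall
      refine hres u v (by omega) (by omega) ?_
      intro r hr
      rcases eq_or_ne r M with rfl | hne
      · simp only [td]; omega
      · exact hall r (Finset.mem_erase.mpr ⟨hne, hr⟩)
    have hsub : nfSet k N S ⊆ Finset.Icc (M - k) (N - 1) ∪ nfSet k N' S' := by
      intro v hv
      rw [mem_nfSet] at hv
      obtain ⟨⟨r, hrS, hr1, hr2⟩, hvN⟩ := hv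
      rcases eq_or_ne r M with rfl | hne
      · exact Finset.mem_union_left _ (Finset.mem_Icc.mpr ⟨hr1, by omega⟩)
      · by_cases hvN' : v < N'
        · exact Finset.mem_union_right _
            (mem_nfSet.mpr ⟨⟨r, Finset.mem_erase.mpr ⟨hne, hrS⟩, hr1, hr2⟩, hvN'⟩)
        · exact Finset.mem_union_left _ (Finset.mem_Icc.mpr ⟨by omega, by omega⟩)
    have hcard' := ih t (by omega) S' N'
      (by rw [hS', Finset.card_erase_of_mem hMS, hcard]; omega) hres'
    have h1 : (nfSet k N S).card ≤ (Finset.Icc (M-k) (N-1)).card + (nfSet k N' S').card :=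
      le_trans (Finset.card_le_card hsub) (Finset.card_union_le _ _)
    have h2 : (Finset.Icc (M-k) (N-1)).card = N - 1 + 1 - (M - k) := Nat.card_Icc _ _
    have h3 := g0_succ k t
    omega
  · -- case B: M + 2 ≤ N
    match t with
    | 0 =>
      -- single landmark, must be 0
      have hSM : S = {M} := by
        apply Finset.eq_singleton_iff_unique_mem.mpr
        refine ⟨hMS, fun x hx => ?_⟩
        have := Finset.card_eq_one.mp hcard
        obtain ⟨a, ha⟩ := this
        rw [ha] at hx hMS
        simp at hx hMS; omega
      have hM0 : M = 0 := by
        by_contra hM0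
        have := hres (M-1) (M+1) (by omega) (by omega) ?_
        · omega
        · intro r hr
          rw [hSM, Finset.mem_singleton] at hr
          subst hr
          simp only [td]; omega
      have hsub : nfSet k N S ⊆ Finset.Icc 0 k := by
        intro v hv
        rw [mem_nfSet] at hv
        obtain ⟨⟨r, hrS, hr1, hr2⟩, hvN⟩ := hv
        rw [hSM, Finset.mem_singleton] at hrS
        exact Finset.mem_Icc.mpr ⟨by omega, by omega⟩
      have h1 := Finset.card_le_card hsub
      have h2 : (Finset.Icc 0 k).card = k + 1 := by rw [Nat.card_Icc]; omega
      show (nfSet k N S).card ≤ g0 k 1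
      simp only [g0]; omega
    | (t+1) =>
      -- at least two landmarks
      set S' := S.erase M with hS'
      have hS'ne : S'.Nonempty := by
        rw [← Finset.card_pos, hS', Finset.card_erase_of_mem hMS, hcard]; omega
      set M2 := S'.max' hS'ne with hM2def
      have hM2S' : M2 ∈ S' := S'.max'_mem hS'ne
      have hM2ne : M2 ≠ M := (Finset.mem_erase.mp hM2S').1
      have hM2S : M2 ∈ S := (Finset.mem_erase.mp hM2S').2
      have hM2le : M2 ≤ M := S.le_max' M2 hM2S
      have hclose : M ≤ M2 + k + 1 := by
        by_contra h'
        have := hres (M-1) (M+1) (by omega) (by omega) ?_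
        · omega
        · intro r hr
          rcases eq_or_ne r M with rfl | hne
          · simp only [td]; omega
          · have hrM2 : r ≤ M2 := S'.le_max' r (Finset.mem_erase.mpr ⟨hne, hr⟩)
            simp only [td]; omega
      set S'' := S'.erase M2 with hS''
      set N'' := min N (M2 - k) with hN''
      have hres'' : NatResolves k N'' S'' := by
        intro u v hu hv hall
        refine hres u v (by omega) (by omega) ?_
        intro r hr
        rcases eq_or_ne r M with rfl | hne
        · simp only [td]; omega
        · rcases eq_or_ne r M2 with rfl | hne2
          · simp only [td]; omega
          · exact hall r (Finset.mem_erase.mpr ⟨hne2, Finset.mem_erase.mpr ⟨hne, hr⟩⟩)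
      have hsub : nfSet k N S ⊆ Finset.Icc (M2 - k) (M + k) ∪ nfSet k N'' S'' := by
        intro v hv
        rw [mem_nfSet] at hv
        obtain ⟨⟨r, hrS, hr1, hr2⟩, hvN⟩ := hv
        rcases eq_or_ne r M with rfl | hne
        · exact Finset.mem_union_left _ (Finset.mem_Icc.mpr ⟨by omega, by omega⟩)
        · have hrM2 : r ≤ M2 := S'.le_max' r (Finset.mem_erase.mpr ⟨hne, hrS⟩)
          rcases eq_or_ne r M2 with rfl | hne2
          · exact Finset.mem_union_left _ (Finset.mem_Icc.mpr ⟨by omega, by omega⟩)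
          · by_cases hvN'' : v < N''
            · exact Finset.mem_union_right _ (mem_nfSet.mpr
                ⟨⟨r, Finset.mem_erase.mpr ⟨hne2, Finset.mem_erase.mpr ⟨hne, hrS⟩⟩, hr1, hr2⟩, hvN''⟩)
            · exact Finset.mem_union_left _ (Finset.mem_Icc.mpr ⟨by omega, by omega⟩)
      have hcard'' : S''.card = t := by
        rw [hS'', Finset.card_erase_of_mem hM2S', hS', Finset.card_erase_of_mem hMS, hcard]; omega
      have hrec := ih t (by omega) S'' N'' hcard'' hres''
      have h1 : (nfSet k N S).card ≤ (Finset.Icc (M2-k) (M+k)).card + (nfSet k N'' S'').card :=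
        le_trans (Finset.card_le_card hsub) (Finset.card_union_le _ _)
      have h2 : (Finset.Icc (M2-k) (M+k)).card = M + k + 1 - (M2 - k) := Nat.card_Icc _ _
      show (nfSet k N S).card ≤ g0 k (t + 2)
      have h3 : g0 k (t+2) = g0 k t + (3*k+2) := rfl
      omega

lemma resolves_card_bound (k N : ℕ) (hk : 1 ≤ k) (S : Finset ℕ) (hres : NatResolves k N S) :
    N ≤ g0 k S.card + 1 := by
  have h1 := nf_card k hk S.card S N rfl hres
  have hsub : nfSet k N S ⊆ Finset.range N := Finset.inter_subset_right
  have hfar : (Finset.range N \ nfSet k N S).card ≤ 1 := by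
    rw [Finset.card_le_one]
    intro a ha b hb
    rw [Finset.mem_sdiff, Finset.mem_range] at ha hb
    obtain ⟨haN, hanf⟩ := ha
    obtain ⟨hbN, hbnf⟩ := hb
    apply hres a b haN hbN
    intro r hr
    have hda : ¬ (r - k ≤ a ∧ a ≤ r + k) := fun hc => hanf (mem_nfSet.mpr ⟨⟨r, hr, hc⟩, haN⟩)
    have hdb : ¬ (r - k ≤ b ∧ b ≤ r + k) := fun hc => hbnf (mem_nfSet.mpr ⟨⟨r, hr, hc⟩, hbN⟩)
    simp only [td]; omega
  have := Finset.card_sdiff_add_card_eq_card hsub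
  rw [Finset.card_range] at this
  omega

lemma F_step (k n : ℕ) (h2 : 2 ≤ n) : F k (n + (3 * k + 2)) = F k n + 2 := by
  have hD : 0 < 3 * k + 2 := by omega
  unfold F
  rw [Nat.add_mod_right, Nat.add_div_right _ hD]
  rw [if_neg (by omega : ¬ (n + (3*k+2) = 1)), if_neg (by omega : ¬ (n = 1))]
  split_ifs <;> omega

lemma F_one (k : ℕ) : F k 1 = 1 := by simp [F]

lemma F_small (k n : ℕ) (hk : 1 ≤ k) (h2 : 2 ≤ n) (h : n < 3*k+2) :
    F k n = if n ≤ k + 2 then 1 else 2 := by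
  unfold F
  rw [if_neg (by omega : ¬ (n = 1)), Nat.mod_eq_of_lt h, Nat.div_eq_of_lt h]
  rw [if_neg (by omega : ¬ (n = 0 ∨ n = 1))]

lemma F_block (k n : ℕ) (hk : 1 ≤ k) (h2 : 3*k+2 ≤ n) (h : n ≤ 3*k+3) :
    F k n = 2 := by
  unfold F
  have hmod : n % (3*k+2) = n - (3*k+2) := by
    rw [Nat.mod_eq_sub_mod h2, Nat.mod_eq_of_lt (by omega)]
  have hdiv : n / (3*k+2) = 1 := Nat.div_eq_of_lt_le (by omega) (by omega)
  rw [if_neg (by omega : ¬ (n = 1)), hmod, hdiv]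
  rw [if_pos (by omega : n - (3*k+2) = 0 ∨ n - (3*k+2) = 1)]

lemma F_le_two (k n : ℕ) (hk : 1 ≤ k) (hn : 1 ≤ n) (h : n ≤ 3*k+3) : F k n ≤ 2 := by
  rcases eq_or_ne n 1 with rfl | h1
  · rw [F_one]; omega
  · by_cases hlt : n < 3*k+2
    · rw [F_small k n hk (by omega) hlt]; split_ifs <;> omega
    · rw [F_block k n hk (by omega) h]

lemma lower_arith (k n t : ℕ) (hk : 1 ≤ k) (hn : 1 ≤ n) (ht : 1 ≤ t)
    (h : n ≤ g0 k t + 1) : F k n ≤ t := by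
  induction t using Nat.strong_induction_on generalizing n with
  | _ t ih =>
  match t, ht with
  | 1, _ =>
    have hg : g0 k 1 = k + 1 := rfl
    rcases eq_or_ne n 1 with rfl | h1
    · rw [F_one]
    · rw [F_small k n hk (by omega) (by omega)]
      rw [if_pos (by omega)]
  | 2, _ =>
    have hg : g0 k 2 = 3*k+2 := by simp [g0]
    exact le_trans (F_le_two k n hk hn (by omega)) le_rfl
  | (t+3), _ =>
    have hg : g0 k (t+3) = g0 k (t+1) + (3*k+2) := rfl
    by_cases hsm : n ≤ 3*k+3
    · have := F_le_two k n hk hn hsm; omega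
    · have hn' : 2 ≤ n - (3*k+2) := by omega
      have hrec := ih (t+1) (by omega) (n - (3*k+2)) (by omega) (by omega) (by omega)
      have := F_step k (n - (3*k+2)) hn'
      rw [show n - (3*k+2) + (3*k+2) = n by omega] at this
      omega

lemma upper_exists (k : ℕ) (hk : 1 ≤ k) :
    ∀ n, 1 ≤ n → ∃ S : Finset ℕ, NatResolves k n S ∧ (∀ s ∈ S, s < n) ∧
      0 < S.card ∧ S.card = F k n := by
  intro n
  induction n using Nat.strong_induction_on with
  | _ n ih =>
  intro hn
  by_cases hc1 : n ≤ k + 2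
  · refine ⟨{0}, resolves_single k n hc1, by simp; omega, by simp, ?_⟩
    rcases eq_or_ne n 1 with rfl | h1
    · rw [F_one]; simp
    · rw [F_small k n hk (by omega) (by omega), if_pos hc1]; simp
  · by_cases hc2 : n ≤ 2*k + 2
    · refine ⟨{0, n - 1}, resolves_ends k n (by omega) hc2, ?_, ?_, ?_⟩
      · intro s hs; simp at hs; omega
      · simp
      · rw [F_small k n hk (by omega) (by omega), if_neg hc1]
        rw [Finset.card_insert_of_notMem (by simp; omega), Finset.card_singleton]
    · by_cases hc3 : n ≤ 3*k + 3
      · refine ⟨{k, k + (n - (2*k+2))},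
          resolves_inner k (n - (2*k+2)) n (by omega) (by omega) (by omega), ?_, ?_, ?_⟩
        · intro s hs; simp at hs; omega
        · simp
        · have hcard2 : ({k, k + (n - (2*k+2))} : Finset ℕ).card = 2 := by
            rw [Finset.card_insert_of_notMem (by simp; omega), Finset.card_singleton]
          rw [hcard2]
          by_cases hsm : n < 3*k+2
          · rw [F_small k n hk (by omega) hsm, if_neg hc1]
          · rw [F_block k n hk (by omega) hc3]
      · obtain ⟨S', h1, h2, h3, h4⟩ := ih (n - (3*k+2)) (by omega) (by omega)
        refine ⟨{k, 2*k+1} ∪ S'.image (· + (3*k+2)), ?_, ?_, ?_, ?_⟩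
        · have := resolves_step k (n - (3*k+2)) hk S' h1
          rw [show n - (3*k+2) + (3*k+2) = n by omega] at this
          exact this
        · intro s hs
          simp only [Finset.mem_union, Finset.mem_insert, Finset.mem_singleton,
            Finset.mem_image] at hs
          rcases hs with (rfl | rfl) | ⟨x, hx, rfl⟩
          · omega
          · omega
          · have := h2 x hx; omega
        · exact Finset.card_pos.mpr ⟨k, by simp⟩
        · rw [Finset.card_union_of_disjoint, Finset.card_image_of_injective _
            (add_left_injective (3*k+2)),
            Finset.card_insert_of_notMem (by simp; omega), Finset.card_singleton, h4]
          · have hFs := F_step k (n - (3*k+2)) (by omega)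
            rw [show n - (3*k+2) + (3*k+2) = n by omega] at hFs
            omega
          · rw [Finset.disjoint_left]
            intro a ha hb
            simp only [Finset.mem_insert, Finset.mem_singleton] at ha
            simp only [Finset.mem_image] at hb
            obtain ⟨x, hx, rfl⟩ := hb
            omega

lemma td_bridge {n : ℕ} (k : ℕ) (u r : Fin n) :
    min (pathDist u r) (k + 1) = td k u.val r.val := by
  simp only [pathDist, td]
  congr 1
  omega

theorem pathTruncDim_formula (n k : ℕ) (hk : 0 < k) (hn : 0 < n) :
    pathTruncDim n k =
      if n = 1 then 1
      else if n % (3 * k + 2) = 0 ∨ n % (3 * k + 2) = 1 then 2 * (n / (3 * k + 2))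
      else if n % (3 * k + 2) ≤ k + 2 then 2 * (n / (3 * k + 2)) + 1
      else 2 * (n / (3 * k + 2)) + 2 := by
  obtain ⟨S, hres, hlt, hpos, hcard⟩ := upper_exists k hk n hn
  have hcardR : (S.attachFin hlt).card = F k n := by
    rw [Finset.card_attachFin]; exact hcard
  have hResR : IsPathTruncResolving n k (S.attachFin hlt) := by
    constructor
    · apply Finset.card_pos.mp
      rw [Finset.card_attachFin]
      exact hpos
    · intro u v hsig
      apply Fin.ext
      apply hres u.val v.val u.isLt v.isLt
      intro r hr
      have hrn : r < n := hlt r hr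
      have hmem : (⟨r, hrn⟩ : Fin n) ∈ S.attachFin hlt := by
        rw [Finset.mem_attachFin]; exact hr
      have := hsig ⟨r, hrn⟩ hmem
      rwa [td_bridge, td_bridge] at this
  have hmem : F k n ∈ {m | ∃ R : Finset (Fin n), IsPathTruncResolving n k R ∧ R.card = m} :=
    ⟨S.attachFin hlt, hResR, hcardR⟩
  have hub : pathTruncDim n k ≤ F k n := Nat.sInf_le hmem
  have hlb : F k n ≤ pathTruncDim n k := by
    apply le_csInf ⟨F k n, hmem⟩
    rintro m ⟨R', ⟨hne', hres'⟩, hcard'⟩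
    have hSres : NatResolves k n (R'.image Fin.val) := by
      intro u v hu hv hall
      have : (⟨u, hu⟩ : Fin n) = ⟨v, hv⟩ := by
        apply hres'
        intro r hr
        have := hall r.val (Finset.mem_image_of_mem _ hr)
        rw [td_bridge, td_bridge]
        exact this
      simpa using this
    have hb := resolves_card_bound k n hk _ hSres
    rw [Finset.card_image_of_injective _ Fin.val_injective, hcard'] at hb
    have hm1 : 1 ≤ m := by
      rw [← hcard']
      exact Finset.card_pos.mpr hne'
    exact lower_arith k n m hk hn hm1 hb
  have : pathTruncDim n k = F k n := le_antisymm hub hlb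
  rw [this]
  rfl
end

section
/- For k > 0 and a path P_n with 1 ≤ n ≤ k+2, the set consisting of a single endpoint of the path is a k-truncated resolving set; hence β_k(P_n) = 1. -/
theorem pathTruncDim_eq_one_of_short (n k : ℕ) (hk : 0 < k) (hn : 0 < n)
    (hnk : n ≤ k + 2) :
    IsPathTruncResolving n k {(⟨0, hn⟩ : Fin n)} ∧ pathTruncDim n k = 1 := by
  have hres : IsPathTruncResolving n k {(⟨0, hn⟩ : Fin n)} := by
    refine ⟨⟨_, Finset.mem_singleton_self _⟩, fun u v h => ?_⟩
    have h0 := h ⟨0, hn⟩ (Finset.mem_singleton_self _)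
    have hu : pathDist u ⟨0, hn⟩ = u.val := by simp [pathDist]
    have hv : pathDist v ⟨0, hn⟩ = v.val := by simp [pathDist]
    rw [hu, hv] at h0
    have hub : True := trivial
    have hvb : v.val ≤ k + 1 := by
      have := v.isLt; omega
    have hub' : u.val ≤ k + 1 := by have := u.isLt; omega
    rw [min_eq_left hub', min_eq_left hvb] at h0
    exact Fin.ext h0
  refine ⟨hres, ?_⟩
  apply le_antisymm
  · exact Nat.sInf_le ⟨_, hres, Finset.card_singleton _⟩
  · refine Nat.le_of_not_lt fun hlt => ?_
    unfold pathTruncDim at hlt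
    have := Nat.sInf_mem (s := {m | ∃ R : Finset (Fin n), IsPathTruncResolving n k R ∧ R.card = m})
      ⟨1, _, hres, Finset.card_singleton _⟩
    obtain ⟨R, ⟨hne, _⟩, hcard⟩ := this
    have : 0 < R.card := Finset.card_pos.mpr hne
    omega
end

section
/- For a connected graph G and integer k > 0, β_k(G) = 1 if and only if G is isomorphic to a path P_n with n ≤ k+2. -/
open SimpleGraph

lemma pg_walk_ge {n : ℕ} : ∀ {i j : Fin n} (w : (pathGraph n).Walk i j),
    j.val - i.val ≤ w.length ∧ i.val - j.val ≤ w.length := by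
  intro i j w
  induction w with
  | nil => simp
  | cons h p ih =>
    rw [pathGraph_adj] at h
    rw [Walk.length_cons]
    obtain ⟨h1, h2⟩ := ih
    rcases h with h | h <;> omega

lemma pg_walk_exists {n : ℕ} : ∀ (d : ℕ) (i j : Fin n), i.val + d = j.val →
    ∃ w : (pathGraph n).Walk i j, w.length = d := by
  intro d
  induction d with
  | zero =>
    intro i j h
    have : i = j := Fin.ext (by omega)
    subst this
    exact ⟨Walk.nil, rfl⟩
  | succ d ih =>
    intro i j h
    have hi : i.val + 1 < n := by omega
    have hadj : (pathGraph n).Adj i ⟨i.val + 1, hi⟩ := pathGraph_adj.mpr (Or.inl rfl)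
    obtain ⟨w, hw⟩ := ih ⟨i.val + 1, hi⟩ j (by simp; omega)
    exact ⟨Walk.cons hadj w, by simp [hw]⟩

lemma pg_dist {n : ℕ} (i j : Fin n) (hij : i.val ≤ j.val) :
    (pathGraph n).dist i j = j.val - i.val := by
  apply le_antisymm
  · obtain ⟨w, hw⟩ := pg_walk_exists (j.val - i.val) i j (by omega)
    exact hw ▸ SimpleGraph.dist_le w
  · obtain ⟨w, hw⟩ := (pathGraph_preconnected n i j).exists_walk_length_eq_dist
    have := (pg_walk_ge w).1
    omega

lemma iso_dist {V W : Type*} {G : SimpleGraph V} {G' : SimpleGraph W} (e : G ≃g G')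
    (u v : V) (h : G.Reachable u v) : G'.dist (e u) (e v) = G.dist u v := by
  apply le_antisymm
  · obtain ⟨p, hp⟩ := h.exists_walk_length_eq_dist
    calc G'.dist (e u) (e v) ≤ (p.map e.toHom).length := SimpleGraph.dist_le _
      _ = p.length := Walk.length_map _ _
      _ = _ := hp
  · have h' : G'.Reachable (e u) (e v) := h.map e.toHom
    obtain ⟨p, hp⟩ := h'.exists_walk_length_eq_dist
    have := SimpleGraph.dist_le ((p.map e.symm.toHom).copy (e.symm_apply_apply u) (e.symm_apply_apply v))
    simp only [Walk.length_copy, Walk.length_map] at this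
    omega


/-- The `k`-truncated distance in a graph: `min (d u v) (k+1)`. -/
noncomputable def truncDist {V : Type*} (G : SimpleGraph V) (k : ℕ) (u v : V) : ℕ :=
  min (G.dist u v) (k + 1)

/-- A nonempty set `R` is a `k`-truncated resolving set if the vectors of truncated
distances to `R` distinguish all vertices. -/
def IsTruncResolving {V : Type*} (G : SimpleGraph V) (k : ℕ) (R : Set V) : Prop :=
  R.Nonempty ∧ ∀ u v : V, (∀ r ∈ R, truncDist G k u r = truncDist G k v r) → u = v

/-- The `k`-truncated metric dimension: minimum size of a `k`-truncated resolving set. -/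
noncomputable def truncMetricDim {V : Type*} [Fintype V] (G : SimpleGraph V) (k : ℕ) : ℕ :=
  sInf {m | ∃ R : Finset V, IsTruncResolving G k ↑R ∧ R.card = m}

lemma descend {V : Type*} {G : SimpleGraph V} (hG : G.Connected) (r : V) :
    ∀ (v : V) (m : ℕ), G.dist v r = m + 1 → ∃ w, G.Adj v w ∧ G.dist w r = m := by
  intro v m hm
  obtain ⟨p, hp⟩ := (hG.preconnected v r).exists_walk_length_eq_dist
  cases p with
  | nil =>
    rw [SimpleGraph.dist_self] at hm
    omega
  | @cons _ w _ hadj q =>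
    rw [Walk.length_cons] at hp
    have hq : G.dist w r ≤ m := by
      have := SimpleGraph.dist_le q
      omega
    have htri := hG.dist_triangle (u := v) (v := w) (w := r)
    have h1 : G.dist v w = 1 := SimpleGraph.dist_eq_one_iff_adj.mpr hadj
    exact ⟨w, hadj, by omega⟩

lemma down_closed {V : Type*} {G : SimpleGraph V} (hG : G.Connected) (r : V) :
    ∀ (m : ℕ) (v : V), G.dist v r = m → ∀ j ≤ m, ∃ w, G.dist w r = j := by
  intro m
  induction m with
  | zero => intro v hv j hj; exact ⟨v, by omega⟩
  | succ m ih =>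
    intro v hv j hj
    rcases Nat.eq_or_lt_of_le hj with h | h
    · exact ⟨v, by omega⟩
    · obtain ⟨w, _, hw⟩ := descend hG r v m hv
      exact ih w hw j (by omega)

theorem truncDim_eq_one_iff_path {V : Type*} [Fintype V] (G : SimpleGraph V)
    (hG : G.Connected) (k : ℕ) (hk : 0 < k) :
    truncMetricDim G k = 1 ↔
      ∃ n : ℕ, n ≤ k + 2 ∧ Nonempty (G ≃g SimpleGraph.pathGraph n) := by
  constructor
  · intro h1
    rw [truncMetricDim] at h1
    have hSne : {m | ∃ R : Finset V, IsTruncResolving G k ↑R ∧ R.card = m}.Nonempty := by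
      by_contra hc
      rw [Set.not_nonempty_iff_eq_empty] at hc
      rw [hc] at h1
      simp at h1
    have hmem := Nat.sInf_mem hSne
    rw [h1] at hmem
    obtain ⟨R, hR, hcard⟩ := hmem
    obtain ⟨r, rfl⟩ := Finset.card_eq_one.mp hcard
    have keyT : ∀ u v : V, truncDist G k u r = truncDist G k v r → u = v := by
      intro u v h
      exact hR.2 u v (by intro x hx; simp only [Finset.coe_singleton, Set.mem_singleton_iff] at hx; subst hx; exact h)
    have key : ∀ u v : V, G.dist u r = G.dist v r → u = v := by
      intro u v h
      exact keyT u v (by rw [truncDist, truncDist, h])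
    set n := Fintype.card V with hn
    have bound : ∀ v : V, G.dist v r < n := by
      intro v
      have hsub : Finset.range (G.dist v r + 1) ⊆ Finset.univ.image (fun w => G.dist w r) := by
        intro j hj
        rw [Finset.mem_range] at hj
        obtain ⟨w, hw⟩ := down_closed hG r _ v rfl j (by omega)
        simp only [Finset.mem_image, Finset.mem_univ, true_and]
        exact ⟨w, hw⟩
      have h2 := Finset.card_le_card hsub
      rw [Finset.card_range] at h2
      have h3 := Finset.card_image_le (s := (Finset.univ : Finset V)) (f := fun w => G.dist w r)
      rw [Finset.card_univ] at h3
      omega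
    set φ : V → Fin n := fun v => ⟨G.dist v r, bound v⟩ with hφ
    have hinj : Function.Injective φ := by
      intro u v h
      exact key u v (by simpa [hφ, Fin.ext_iff] using h)
    have hbij : Function.Bijective φ :=
      (Fintype.bijective_iff_injective_and_card φ).mpr ⟨hinj, by simp [hn]⟩
    have hnk : n ≤ k + 2 := by
      by_contra hc
      push_neg at hc
      obtain ⟨u, hu⟩ := hbij.surjective ⟨k + 1, by omega⟩
      obtain ⟨w, hw⟩ := hbij.surjective ⟨k + 2, by omega⟩
      have hu' : G.dist u r = k + 1 := by simpa [hφ, Fin.ext_iff] using hu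
      have hw' : G.dist w r = k + 2 := by simpa [hφ, Fin.ext_iff] using hw
      have : u = w := keyT u w (by rw [truncDist, truncDist, hu', hw']; omega)
      rw [this, hw'] at hu'
      omega
    refine ⟨n, hnk, ⟨⟨Equiv.ofBijective φ hbij, ?_⟩⟩⟩
    intro a b
    show (pathGraph n).Adj (φ a) (φ b) ↔ G.Adj a b
    rw [pathGraph_adj]
    show G.dist a r + 1 = G.dist b r ∨ G.dist b r + 1 = G.dist a r ↔ G.Adj a b
    constructor
    · rintro (h | h)
      · obtain ⟨w, hadj, hw⟩ := descend hG r b (G.dist a r) h.symm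
        rw [key w a hw] at hadj
        exact hadj.symm
      · obtain ⟨w, hadj, hw⟩ := descend hG r a (G.dist b r) h.symm
        rw [key w b hw] at hadj
        exact hadj
    · intro hadj
      have h1 : G.dist a b = 1 := SimpleGraph.dist_eq_one_iff_adj.mpr hadj
      have h2 : G.dist b a = 1 := SimpleGraph.dist_eq_one_iff_adj.mpr hadj.symm
      have t1 := hG.dist_triangle (u := a) (v := b) (w := r)
      have t2 := hG.dist_triangle (u := b) (v := a) (w := r)
      have hne : G.dist a r ≠ G.dist b r := fun h => hadj.ne (key a b h)
      omega
  · rintro ⟨n, hn, ⟨e⟩⟩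
    have hne : Nonempty V := hG.nonempty
    have hcard : Fintype.card V = n := by simpa using Fintype.card_congr e.toEquiv
    have hn1 : 0 < n := by rw [← hcard]; exact Fintype.card_pos
    set z : Fin n := ⟨0, hn1⟩ with hz
    set r : V := e.symm z with hr
    have hdist : ∀ u : V, G.dist u r = (e u).val := by
      intro u
      rw [← iso_dist e u r (hG.preconnected u r)]
      have hez : e r = z := e.apply_symm_apply z
      rw [hez, SimpleGraph.dist_comm, pg_dist z (e u) (by simp [hz])]
      simp [hz]
    have h1 : (1 : ℕ) ∈ {m | ∃ R : Finset V, IsTruncResolving G k ↑R ∧ R.card = m} := by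
      refine ⟨{r}, ⟨⟨r, by simp⟩, ?_⟩, by simp⟩
      intro u v huv
      have h := huv r (by simp)
      rw [truncDist, truncDist, hdist u, hdist v] at h
      have hu : (e u).val ≤ k + 1 := by have := (e u).isLt; omega
      have hv : (e v).val ≤ k + 1 := by have := (e v).isLt; omega
      rw [min_eq_left hu, min_eq_left hv] at h
      exact e.toEquiv.injective (Fin.ext h)
    have hle : truncMetricDim G k ≤ 1 := Nat.sInf_le h1
    have hmem := Nat.sInf_mem (⟨1, h1⟩ : Set.Nonempty _)
    obtain ⟨R, hR, hcardR⟩ := hmem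
    have hpos : 0 < R.card := Finset.card_pos.mpr (by
      obtain ⟨x, hx⟩ := hR.1
      exact ⟨x, Finset.mem_coe.mp hx⟩)
    rw [truncMetricDim] at hle ⊢
    omega
end

section
/- For a cycle C_n with 2 < n ≤ 3k+3 and k > 0, β_k(C_n) = 2. -/
/-- Geodesic distance on the cycle `C_n` (vertices indexed by `Fin n`). -/
def cycleDist {n : ℕ} (u v : Fin n) : ℕ := min (pathDist u v) (n - pathDist u v)

/-- `R` is a `k`-truncated resolving set of the cycle `C_n`. -/
def IsCycleTruncResolving (n k : ℕ) (R : Finset (Fin n)) : Prop :=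
  R.Nonempty ∧ ∀ u v : Fin n,
    (∀ r ∈ R, min (cycleDist u r) (k + 1) = min (cycleDist v r) (k + 1)) → u = v

/-- The `k`-truncated metric dimension of the cycle `C_n`. -/
noncomputable def cycleTruncDim (n k : ℕ) : ℕ :=
  sInf {m | ∃ R : Finset (Fin n), IsCycleTruncResolving n k R ∧ R.card = m}

theorem aux0 (n k u v : ℕ)
    (h0 : min (min (max u 0 - min u 0) (n - (max u 0 - min u 0))) (k+1)
        = min (min (max v 0 - min v 0) (n - (max v 0 - min v 0))) (k+1)) :
    min u (n - u) = min v (n - v)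
      ∨ (k + 1 ≤ min u (n - u) ∧ k + 1 ≤ min v (n - v)) := by omega

theorem auxa (n k a u v : ℕ)
    (ha : min (min (max u a - min u a) (n - (max u a - min u a))) (k+1)
        = min (min (max v a - min v a) (n - (max v a - min v a))) (k+1)) :
    min (max u a - min u a) (n - (max u a - min u a))
        = min (max v a - min v a) (n - (max v a - min v a))
      ∨ (k + 1 ≤ min (max u a - min u a) (n - (max u a - min u a))
        ∧ k + 1 ≤ min (max v a - min v a) (n - (max v a - min v a))) := by omega

theorem key_arith (n k a u v : ℕ) (hk : 0 < k) (h2 : 2 < n)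
    (ha1 : 1 ≤ a) (ha2 : a ≤ k + 1) (ha3 : n ≤ a + 2 * k + 2) (ha4 : 2 * a ≠ n)
    (ha5 : a < n) (hu : u < n) (hv : v < n)
    (h0 : min (min (max u 0 - min u 0) (n - (max u 0 - min u 0))) (k+1)
        = min (min (max v 0 - min v 0) (n - (max v 0 - min v 0))) (k+1))
    (ha : min (min (max u a - min u a) (n - (max u a - min u a))) (k+1)
        = min (min (max v a - min v a) (n - (max v a - min v a))) (k+1)) :
    u = v := by
  have H0 := aux0 n k u v h0
  have Ha := auxa n k a u v ha
  clear h0 ha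
  rcases H0 with H0 | H0 <;> rcases Ha with Ha | Ha <;> omega

lemma key_resolve (n k a : ℕ) (hk : 0 < k) (h2 : 2 < n)
    (ha1 : 1 ≤ a) (ha2 : a ≤ k + 1) (ha3 : n ≤ a + 2 * k + 2) (ha4 : 2 * a ≠ n)
    (ha5 : a < n) :
    IsCycleTruncResolving n k {(⟨0, by omega⟩ : Fin n), ⟨a, ha5⟩} := by
  constructor
  · exact ⟨⟨0, by omega⟩, by simp⟩
  · intro u v h
    have h0 := h ⟨0, by omega⟩ (by simp)
    have ha := h ⟨a, ha5⟩ (by simp)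
    simp only [cycleDist, pathDist] at h0 ha
    exact Fin.ext (key_arith n k a u.val v.val hk h2 ha1 ha2 ha3 ha4 ha5 u.isLt v.isLt h0 ha)

lemma exists_same_dist (n : ℕ) (h2 : 2 < n) (r : Fin n) :
    ∃ u v : Fin n, u ≠ v ∧ cycleDist u r = cycleDist v r := by
  have hr := r.isLt
  refine ⟨⟨if r.val + 1 < n then r.val + 1 else 0, by split <;> omega⟩,
          ⟨if 1 ≤ r.val then r.val - 1 else n - 1, by split <;> omega⟩, ?_, ?_⟩
  · intro hcon
    have := congrArg Fin.val hcon
    simp only at this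
    split at this <;> split at this <;> omega
  · simp only [cycleDist, pathDist]
    split <;> split <;> omega

theorem cycleTruncDim_small (n k : ℕ) (hk : 0 < k) (h2 : 2 < n)
    (hn : n ≤ 3 * k + 3) :
    cycleTruncDim n k = 2 := by
  have hmem : 2 ∈ {m | ∃ R : Finset (Fin n), IsCycleTruncResolving n k R ∧ R.card = m} := by
    by_cases hc : 2 * (k + 1) = n
    · refine ⟨{(⟨0, by omega⟩ : Fin n), ⟨k, by omega⟩}, key_resolve n k k hk h2 (by omega)
        (by omega) (by omega) (by omega) (by omega), ?_⟩
      rw [Finset.card_pair]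
      intro hcon
      have := congrArg Fin.val hcon
      simp only at this
      omega
    · have ha5 : min (k + 1) (n - 1) < n := by omega
      refine ⟨{(⟨0, by omega⟩ : Fin n), ⟨min (k + 1) (n - 1), ha5⟩},
        key_resolve n k (min (k + 1) (n - 1)) hk h2 (by omega) (by omega) (by omega)
        (by omega) ha5, ?_⟩
      rw [Finset.card_pair]
      intro hcon
      have := congrArg Fin.val hcon
      simp only at this
      omega
  refine le_antisymm (Nat.sInf_le hmem) ?_
  apply le_csInf ⟨2, hmem⟩
  rintro m ⟨R, ⟨hne, hres⟩, hcard⟩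
  by_contra hlt
  push_neg at hlt
  interval_cases m
  · exact absurd (Finset.card_eq_zero.mp hcard) (Finset.nonempty_iff_ne_empty.mp hne)
  · obtain ⟨r, hr⟩ := Finset.card_eq_one.mp hcard
    obtain ⟨u, v, huv, hd⟩ := exists_same_dist n h2 r
    apply huv
    apply hres
    intro s hs
    rw [hr, Finset.mem_singleton] at hs
    subst hs
    rw [hd]
end

section
/- For a cycle C_n with n > 3k+3 and k > 0, β_k(C_n) = β_k(P_n), where P_n is the path on n vertices. -/
/-! ### Toolkit -/

def cdn (n a b : ℕ) : ℕ := min (max a b - min a b) (n - (max a b - min a b))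

lemma cycleDist_cdn {n : ℕ} (u v : Fin n) : cycleDist u v = cdn n u.val v.val := rfl

lemma mod_cases_aux (x m : ℕ) (h : x < 2 * m) : x % m = x ∨ x % m + m = x := by
  rcases Nat.lt_or_ge x m with h1 | h1
  · left; exact Nat.mod_eq_of_lt h1
  · right
    rw [Nat.mod_eq_sub_mod h1, Nat.mod_eq_of_lt (by omega)]
    omega

def fshift {n : ℕ} (r : Fin n) (s : ℕ) : Fin n := ⟨(r.val + s) % n, Nat.mod_lt _ r.pos⟩

lemma fshift_val {n : ℕ} (r : Fin n) (s : ℕ) (hs : s ≤ n) :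
    (fshift r s).val = r.val + s ∨ (fshift r s).val + n = r.val + s := by
  have := r.isLt
  exact mod_cases_aux _ _ (by omega)

lemma fshift_zero {n : ℕ} (r : Fin n) : fshift r 0 = r := by
  have := r.isLt
  simp [fshift, Nat.mod_eq_of_lt this]

lemma fshift_n {n : ℕ} (r : Fin n) : fshift r n = r := by
  have := r.isLt
  simp [fshift, Nat.add_mod_right, Nat.mod_eq_of_lt this]

lemma fshift_add {n : ℕ} (r : Fin n) (s t : ℕ) : fshift (fshift r s) t = fshift r (s + t) := by
  simp [fshift, Nat.mod_add_mod, Nat.add_assoc]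

lemma fshift_mod {n : ℕ} (r : Fin n) (s : ℕ) : fshift r (s + n) = fshift r s := by
  simp [fshift, ← Nat.add_assoc, Nat.add_mod_right]

lemma fshift_inj {n : ℕ} (r : Fin n) {s t : ℕ} (hs : s < n) (ht : t < n)
    (h : fshift r s = fshift r t) : s = t := by
  have h1 := fshift_val r s (by omega)
  have h2 := fshift_val r t (by omega)
  rw [h] at h1
  have := (fshift r t).isLt; have := r.isLt
  omega

lemma cycleDist_fshift {n : ℕ} (a : Fin n) (s t : ℕ) (hs : s ≤ n) (ht : t ≤ n) :
    cycleDist (fshift a s) (fshift a t) = cdn n s t := by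
  have h1 := fshift_val a s hs
  have h2 := fshift_val a t ht
  have l1 := (fshift a s).isLt; have l2 := (fshift a t).isLt; have l3 := a.isLt
  show cdn n (fshift a s).val (fshift a t).val = cdn n s t
  unfold cdn
  rcases h1 with h1|h1 <;> rcases h2 with h2|h2 <;> omega

lemma cycleDist_comm {n : ℕ} (a b : Fin n) : cycleDist a b = cycleDist b a := by
  unfold cycleDist pathDist
  omega

lemma cycleDist_fshift_base {n : ℕ} (r : Fin n) (t : ℕ) (ht : t < n) :
    cycleDist (fshift r t) r = min t (n - t) := by
  have h := cycleDist_fshift r t 0 (le_of_lt ht) (by omega)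
  rw [fshift_zero] at h
  rw [h]; unfold cdn; omega

lemma exists_shift {n : ℕ} (a x : Fin n) : ∃ s, s < n ∧ fshift a s = x := by
  have ha := a.isLt; have hx := x.isLt
  rcases le_or_gt a.val x.val with h | h
  · exact ⟨x.val - a.val, by omega, by
      apply Fin.ext
      show (a.val + (x.val - a.val)) % n = x.val
      rw [show a.val + (x.val - a.val) = x.val by omega, Nat.mod_eq_of_lt hx]⟩
  · exact ⟨n - a.val + x.val, by omega, by
      apply Fin.ext
      show (a.val + (n - a.val + x.val)) % n = x.val
      rw [show a.val + (n - a.val + x.val) = n + x.val by omega, Nat.add_mod_left,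
        Nat.mod_eq_of_lt hx]⟩

lemma cycleDist_eq_zero' {n : ℕ} {a b : Fin n} (h : cycleDist a b = 0) : a = b := by
  have ha := a.isLt; have hb := b.isLt
  unfold cycleDist pathDist at h
  exact Fin.ext (by omega)

lemma pathDist_eq_zero' {n : ℕ} {a b : Fin n} (h : pathDist a b = 0) : a = b := by
  unfold pathDist at h
  exact Fin.ext (by omega)

lemma cycleDist_triangle {n : ℕ} (a b c : Fin n) :
    cycleDist a c ≤ cycleDist a b + cycleDist b c := by
  have h1 := a.isLt; have h2 := b.isLt; have h3 := c.isLt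
  unfold cycleDist pathDist
  omega

lemma cycleDist_le_pathDist {n : ℕ} (a b : Fin n) : cycleDist a b ≤ pathDist a b :=
  min_le_left _ _

set_option maxHeartbeats 1000000 in
lemma cal' (n k x y z : ℕ) (hn : 3*k+4 ≤ n) (hk : 1 ≤ k)
    (hx : x < n) (hy : y < n) (hz : z < n) (hxy : x ≠ y)
    (hj : min x (n-x) ≤ k) (hjeq : min y (n-y) = min x (n-x)) (hj1 : 1 ≤ min x (n-x))
    (hz1 : 1 ≤ min z (n-z)) (hzk : min z (n-z) ≤ k+1)
    (hcode : min (cdn n x z) (k+1) = min (cdn n y z) (k+1)) : False := by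
  obtain ⟨j, hjk, hjp, dx, dy⟩ : ∃ j, j ≤ k ∧ 1 ≤ j ∧ (x = j ∨ x + j = n) ∧
      (y = j ∨ y + j = n) := ⟨min x (n-x), hj, hj1, by omega, by omega⟩
  obtain ⟨s, hsk, hsp, dz⟩ : ∃ s, s ≤ k+1 ∧ 1 ≤ s ∧ (z = s ∨ z + s = n) :=
    ⟨min z (n-z), hzk, hz1, by omega⟩
  clear hj hjeq hj1 hz1 hzk
  unfold cdn at hcode
  rcases dx with h1|h1 <;> rcases dy with h2|h2 <;> rcases dz with h3|h3 <;> omega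

/-! ### Path characterization -/

section PathChar
variable {n k : ℕ}

lemma path_nec_A {R : Finset (Fin n)} (h : IsPathTruncResolving n k R) :
    ∀ u v : Fin n, (∀ r ∈ R, k + 1 ≤ pathDist u r) → (∀ r ∈ R, k + 1 ≤ pathDist v r) → u = v := by
  intro u v hu hv
  apply h.2
  intro r hr
  have h1 := hu r hr; have h2 := hv r hr
  omega

lemma path_nec_B {R : Finset (Fin n)} (h : IsPathTruncResolving n k R) :
    ∀ r ∈ R, r.val ≠ 0 → r.val ≠ n - 1 → ∃ r' ∈ R, r' ≠ r ∧ pathDist r r' ≤ k + 1 := by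
  intro r hr h0 h1
  by_contra hno
  push_neg at hno
  have hrlt := r.isLt
  have hu : r.val - 1 < n := by omega
  have hv : r.val + 1 < n := by omega
  have heq : (⟨r.val - 1, hu⟩ : Fin n) = ⟨r.val + 1, hv⟩ := by
    apply h.2
    intro r' hr'
    by_cases h' : r' = r
    · subst h'
      unfold pathDist
      simp only [Fin.val_mk]
      congr 1
      omega
    · have hval : r'.val ≠ r.val := fun hh => h' (Fin.ext hh)
      have := hno r' hr' h'
      unfold pathDist at this ⊢
      simp only [Fin.val_mk]
      have := r'.isLt
      omega
  rw [Fin.mk.injEq] at heq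
  omega

lemma path_suff (R : Finset (Fin n)) (hne : R.Nonempty)
    (hA : ∀ u v : Fin n, (∀ r ∈ R, k + 1 ≤ pathDist u r) → (∀ r ∈ R, k + 1 ≤ pathDist v r) → u = v)
    (hB : ∀ r ∈ R, r.val ≠ 0 → r.val ≠ n - 1 → ∃ r' ∈ R, r' ≠ r ∧ pathDist r r' ≤ k + 1) :
    IsPathTruncResolving n k R := by
  refine ⟨hne, fun u v hcode => ?_⟩
  by_cases hu : ∀ r ∈ R, k + 1 ≤ pathDist u r
  · refine hA u v hu (fun r hr => ?_)
    have h1 := hcode r hr; have h2 := hu r hr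
    omega
  · push_neg at hu
    obtain ⟨r, hr, hlt⟩ := hu
    have hvr : pathDist v r = pathDist u r := by have := hcode r hr; omega
    rcases Nat.eq_zero_or_pos (pathDist u r) with hj | hj
    · rw [pathDist_eq_zero' hj]
      exact (pathDist_eq_zero' (hvr.trans hj)).symm
    · by_cases huv : u.val = v.val
      · exact Fin.ext huv
      exfalso
      set j := pathDist u r with hjdef
      have hu2 : u.val + j = r.val ∨ u.val = r.val + j := by unfold pathDist at hjdef; omega
      have hv2 : v.val + j = r.val ∨ v.val = r.val + j := by
        unfold pathDist at hvr hjdef; omega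
      have hult := u.isLt; have hvlt := v.isLt; have hrlt := r.isLt
      have hr0 : r.val ≠ 0 := by omega
      have hr1 : r.val ≠ n - 1 := by omega
      obtain ⟨r', hr', hner, hler⟩ := hB r hr hr0 hr1
      have hval : r'.val ≠ r.val := fun hh => hner (Fin.ext hh)
      have hcc := hcode r' hr'
      unfold pathDist at hcc hler
      have := r'.isLt
      omega

end PathChar

/-! ### Cycle characterization -/

section CycleChar
variable {n k : ℕ}

lemma cycle_nec_A {R : Finset (Fin n)} (h : IsCycleTruncResolving n k R) :
    ∀ u v : Fin n, (∀ r ∈ R, k + 1 ≤ cycleDist u r) → (∀ r ∈ R, k + 1 ≤ cycleDist v r) → u = v := by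
  intro u v hu hv
  apply h.2
  intro r hr
  have h1 := hu r hr; have h2 := hv r hr
  omega

lemma cycle_nec_B (hn : 3 ≤ n) {R : Finset (Fin n)} (h : IsCycleTruncResolving n k R) :
    ∀ r ∈ R, ∃ r' ∈ R, r' ≠ r ∧ cycleDist r r' ≤ k + 1 := by
  intro r hr
  by_contra hno
  push_neg at hno
  have key : fshift r 1 = fshift r (n-1) := by
    apply h.2
    intro r' hr'
    have d1 : cycleDist (fshift r 1) r = min 1 (n-1) := cycleDist_fshift_base r 1 (by omega)
    have d2 : cycleDist (fshift r (n-1)) r = min (n-1) (n-(n-1)) :=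
      cycleDist_fshift_base r (n-1) (by omega)
    by_cases he : r' = r
    · subst he
      rw [d1, d2]
      congr 1
      omega
    · have hge : k + 2 ≤ cycleDist r r' := by
        have := hno r' hr' he
        omega
      have tri1 := cycleDist_triangle r (fshift r 1) r'
      have tri2 := cycleDist_triangle r (fshift r (n-1)) r'
      rw [cycleDist_comm r (fshift r 1), d1] at tri1
      rw [cycleDist_comm r (fshift r (n-1)), d2] at tri2
      have b1 : k + 1 ≤ cycleDist (fshift r 1) r' := by omega
      have b2 : k + 1 ≤ cycleDist (fshift r (n-1)) r' := by omega
      omega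
  have := fshift_inj r (by omega : (1:ℕ) < n) (by omega : n - 1 < n) key
  omega

lemma cycle_suff (hk : 1 ≤ k) (hn : 3*k+4 ≤ n) (R : Finset (Fin n)) (hne : R.Nonempty)
    (hA : ∀ u v : Fin n, (∀ r ∈ R, k+1 ≤ cycleDist u r) → (∀ r ∈ R, k+1 ≤ cycleDist v r) → u = v)
    (hB : ∀ r ∈ R, ∃ r' ∈ R, r' ≠ r ∧ cycleDist r r' ≤ k+1) :
    IsCycleTruncResolving n k R := by
  refine ⟨hne, fun u v hcode => ?_⟩
  by_cases hu : ∀ r ∈ R, k + 1 ≤ cycleDist u r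
  · refine hA u v hu fun r hr => ?_
    have h1 := hcode r hr; have h2 := hu r hr
    omega
  · push_neg at hu
    obtain ⟨r, hr, hlt⟩ := hu
    have hvr : cycleDist v r = cycleDist u r := by have := hcode r hr; omega
    rcases Nat.eq_zero_or_pos (cycleDist u r) with hj | hj
    · rw [cycleDist_eq_zero' hj]
      exact (cycleDist_eq_zero' (hvr.trans hj)).symm
    · by_cases huv : u = v
      · exact huv
      exfalso
      obtain ⟨p, hp, hpne, hpbud⟩ := hB r hr
      obtain ⟨x, hxlt, hxe⟩ := exists_shift r u
      obtain ⟨y, hylt, hye⟩ := exists_shift r v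
      obtain ⟨z, hzlt, hze⟩ := exists_shift r p
      have hxy : x ≠ y := fun hh => huv (by rw [← hxe, ← hye, hh])
      have du : cycleDist u r = min x (n - x) := by
        rw [← hxe]; exact cycleDist_fshift_base r x hxlt
      have dv : cycleDist v r = min y (n - y) := by
        rw [← hye]; exact cycleDist_fshift_base r y hylt
      have dp : cycleDist r p = min z (n - z) := by
        rw [← hze, cycleDist_comm]; exact cycleDist_fshift_base r z hzlt
      have dup : cycleDist u p = cdn n x z := by
        rw [← hxe, ← hze]; exact cycleDist_fshift r x z (by omega) (by omega)
      have dvp : cycleDist v p = cdn n y z := by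
        rw [← hye, ← hze]; exact cycleDist_fshift r y z (by omega) (by omega)
      have hz1 : 1 ≤ cycleDist r p := by
        rcases Nat.eq_zero_or_pos (cycleDist r p) with h0 | h0
        · exact absurd (cycleDist_eq_zero' h0).symm hpne
        · exact h0
      have hcc := hcode p hp
      rw [dup, dvp] at hcc
      exact cal' n k x y z hn hk hxlt hylt hzlt hxy (by omega) (by omega) (by omega)
        (by omega) (by omega) hcc

end CycleChar

/-! ### Reflection -/

section Reflection
variable {n k : ℕ}

def frev {n : ℕ} (x : Fin n) : Fin n := ⟨n - 1 - x.val, by have := x.isLt; omega⟩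

lemma frev_invol (x : Fin n) : frev (frev x) = x := by
  have := x.isLt
  apply Fin.ext
  show n - 1 - (n - 1 - x.val) = x.val
  omega

lemma frev_inj : Function.Injective (frev (n := n)) := by
  intro a b hab
  have := congrArg frev hab
  rwa [frev_invol, frev_invol] at this

lemma pathDist_frev (a b : Fin n) : pathDist (frev a) (frev b) = pathDist a b := by
  have := a.isLt; have := b.isLt
  unfold pathDist frev
  simp only [Fin.val_mk]
  omega

lemma cycleDist_frev (a b : Fin n) : cycleDist (frev a) (frev b) = cycleDist a b := by
  unfold cycleDist
  rw [pathDist_frev]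

lemma path_resolving_frev {R : Finset (Fin n)} (h : IsPathTruncResolving n k R) :
    IsPathTruncResolving n k (R.image frev) := by
  refine ⟨h.1.image _, fun u v hcode => ?_⟩
  have key : ∀ (w r : Fin n), pathDist w (frev r) = pathDist (frev w) r := by
    intro w r
    conv_rhs => rw [← frev_invol r]
    rw [pathDist_frev]
  have := h.2 (frev u) (frev v) (fun r hr => by
    rw [← key u r, ← key v r]
    exact hcode (frev r) (Finset.mem_image_of_mem _ hr))
  exact frev_inj (n := n) this

end Reflection

/-! ### Glue : from a path resolving set to a cycle resolving set -/

section Glue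
variable {n k : ℕ}

set_option maxHeartbeats 2000000 in
lemma glue_surgery (hk : 1 ≤ k) (hn : 3*k+4 ≤ n) (R : Finset (Fin n))
    (h : IsPathTruncResolving n k R) (z l : Fin n) (hzv : z.val = 0) (hlv : l.val = n - 1)
    (hz : z ∈ R) (hl : l ∉ R)
    (hnb : ∀ r ∈ R, r ≠ z → ¬(cycleDist z r ≤ k+1)) :
    ∃ R' : Finset (Fin n), IsCycleTruncResolving n k R' ∧ R'.card = R.card := by
  -- any landmark other than z has value in [k+2, n-k-2]
  have hfar : ∀ r ∈ R, r ≠ z → k + 2 ≤ r.val ∧ r.val ≤ n - k - 2 := by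
    intro r hr hne
    have h1 := hnb r hr hne
    have h2 := r.isLt
    have h3 : r.val ≠ 0 := fun hh => hne (Fin.ext (hh.trans hzv.symm))
    unfold cycleDist pathDist at h1
    omega
  -- the erase of z is nonempty
  have hexist : (R.erase z).Nonempty := by
    rw [Finset.nonempty_iff_ne_empty]
    intro hempty
    have hall : ∀ r ∈ R, r = z := by
      intro r hr
      by_contra hne
      have : r ∈ R.erase z := Finset.mem_erase.mpr ⟨hne, hr⟩
      rw [hempty] at this
      exact absurd this (Finset.notMem_empty r)
    have heq : (⟨k+1, by omega⟩ : Fin n) = ⟨k+2, by omega⟩ := by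
      apply path_nec_A h <;>
      · intro r hr
        rw [hall r hr]
        unfold pathDist
        simp only [Fin.val_mk]
        omega
    rw [Fin.mk.injEq] at heq
    omega
  set r2 : Fin n := (R.erase z).min' hexist with hr2def
  have hr2mem : r2 ∈ R.erase z := Finset.min'_mem _ _
  have hr2R : r2 ∈ R := (Finset.mem_erase.mp hr2mem).2
  have hr2nz : r2 ≠ z := (Finset.mem_erase.mp hr2mem).1
  have hr2far := hfar r2 hr2R hr2nz
  have hr2min : ∀ s ∈ R, s ≠ z → r2.val ≤ s.val := by
    intro s hs hsne
    exact Finset.min'_le _ s (Finset.mem_erase.mpr ⟨hsne, hs⟩)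
  -- r2 ≤ 2k+2
  have hr2le : r2.val ≤ 2*k + 2 := by
    by_contra hcon
    push_neg at hcon
    have heq : (⟨k+1, by omega⟩ : Fin n) = ⟨k+2, by omega⟩ := by
      apply path_nec_A h <;>
      · intro s hs
        by_cases hsz : s = z
        · subst hsz
          unfold pathDist
          simp only [Fin.val_mk]
          omega
        · have := hr2min s hs hsz
          have := (hfar s hs hsz).1
          have := s.isLt
          unfold pathDist
          simp only [Fin.val_mk]
          omega
    rw [Fin.mk.injEq] at heq
    omega
  set x : Fin n := ⟨r2.val - (k+1), by omega⟩ with hxdef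
  have hxval : x.val = r2.val - (k+1) := rfl
  have hxnot : x ∉ R.erase z := by
    intro hmem
    have h1 := (Finset.mem_erase.mp hmem).2
    have h2 := (Finset.mem_erase.mp hmem).1
    have := (hfar x h1 h2).1
    omega
  set R' : Finset (Fin n) := insert x (R.erase z) with hR'def
  have hcard : R'.card = R.card := by
    rw [hR'def, Finset.card_insert_of_notMem hxnot, Finset.card_erase_of_mem hz]
    have : 1 ≤ R.card := Finset.card_pos.mpr ⟨z, hz⟩
    omega
  have hdxr2 : cycleDist x r2 ≤ k + 1 := by
    unfold cycleDist pathDist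
    have := r2.isLt
    simp only [hxval]
    omega
  have hxner2 : x ≠ r2 := by
    intro hh
    have := congrArg Fin.val hh
    rw [hxval] at this
    omega
  refine ⟨R', ?_, hcard⟩
  apply cycle_suff hk hn
  · exact ⟨x, Finset.mem_insert_self _ _⟩
  · -- invisibility
    intro u v hu hv
    have claim : ∀ w : Fin n, (∀ s ∈ R', k+1 ≤ cycleDist w s) →
        (w = z ∧ r2.val = 2*k+2) ∨ (∀ s ∈ R, k+1 ≤ pathDist w s) := by
      intro w hw
      by_cases hwv : k + 1 ≤ w.val
      · right
        intro s hs
        by_cases hsz : s = z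
        · subst hsz
          unfold pathDist
          omega
        · have h1 := hw s (Finset.mem_insert_of_mem (Finset.mem_erase.mpr ⟨hsz, hs⟩))
          exact le_trans h1 (cycleDist_le_pathDist w s)
      · left
        push_neg at hwv
        have h1 := hw x (Finset.mem_insert_self _ _)
        unfold cycleDist pathDist at h1
        have h2 := w.isLt
        constructor
        · exact Fin.ext (by rw [hzv]; omega)
        · omega
    have hmid : r2.val = 2*k+2 → ∀ s ∈ R, k+1 ≤ pathDist (⟨k+1, by omega⟩ : Fin n) s := by
      intro h22 s hs
      by_cases hsz : s = z
      · subst hsz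
        unfold pathDist
        simp only [Fin.val_mk]
        omega
      · have := hr2min s hs hsz
        have := s.isLt
        unfold pathDist
        simp only [Fin.val_mk]
        omega
    rcases claim u hu with hcu | hcu <;> rcases claim v hv with hcv | hcv
    · rw [hcu.1, hcv.1]
    · exfalso
      have hveq : v = ⟨k+1, by omega⟩ := path_nec_A h v _ hcv (hmid hcu.2)
      have h1 := hv x (Finset.mem_insert_self _ _)
      rw [hveq] at h1
      unfold cycleDist pathDist at h1
      have := hcu.2
      simp only [Fin.val_mk, hxval] at h1
      omega
    · exfalso
      have hueq : u = ⟨k+1, by omega⟩ := path_nec_A h u _ hcu (hmid hcv.2)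
      have h1 := hu x (Finset.mem_insert_self _ _)
      rw [hueq] at h1
      unfold cycleDist pathDist at h1
      have := hcv.2
      simp only [Fin.val_mk, hxval] at h1
      omega
    · exact path_nec_A h u v hcu hcv
  · -- buddies
    intro r hrR'
    rcases Finset.mem_insert.mp hrR' with hrx | hrE
    · subst hrx
      exact ⟨r2, Finset.mem_insert_of_mem hr2mem, Ne.symm hxner2, hdxr2⟩
    · by_cases hrr2 : r = r2
      · subst hrr2
        refine ⟨x, Finset.mem_insert_self _ _, hxner2, ?_⟩
        rw [cycleDist_comm]
        exact hdxr2
      · have hrR := (Finset.mem_erase.mp hrE).2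
        have hrnz := (Finset.mem_erase.mp hrE).1
        have hfarr := hfar r hrR hrnz
        have hr0 : r.val ≠ 0 := by omega
        have hr1 : r.val ≠ n - 1 := by
          intro hh
          exact hl ((Fin.ext (hh.trans hlv.symm) : r = l) ▸ hrR)
        obtain ⟨r3, hr3, hner3, hler3⟩ := path_nec_B h r hrR hr0 hr1
        have hr3nz : r3 ≠ z := by
          intro hh
          subst hh
          unfold pathDist at hler3
          rw [hzv] at hler3
          omega
        exact ⟨r3, Finset.mem_insert_of_mem (Finset.mem_erase.mpr ⟨hr3nz, hr3⟩),
          hner3, le_trans (cycleDist_le_pathDist r r3) hler3⟩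

set_option maxHeartbeats 1000000 in
lemma glue (hk : 1 ≤ k) (hn : 3*k+4 ≤ n) (R : Finset (Fin n))
    (h : IsPathTruncResolving n k R) :
    ∃ R' : Finset (Fin n), IsCycleTruncResolving n k R' ∧ R'.card = R.card := by
  set z : Fin n := ⟨0, by omega⟩ with hzdef
  set l : Fin n := ⟨n-1, by omega⟩ with hldef
  have hzv : z.val = 0 := rfl
  have hlv : l.val = n - 1 := rfl
  have hnlz : l ≠ z := by
    intro hh
    have := congrArg Fin.val hh
    rw [hzv, hlv] at this
    omega
  by_cases hc0 : z ∈ R ∧ l ∉ R ∧ ∀ r ∈ R, r ≠ z → ¬(cycleDist z r ≤ k+1)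
  · exact glue_surgery hk hn R h z l hzv hlv hc0.1 hc0.2.1 hc0.2.2
  by_cases hc1 : l ∈ R ∧ z ∉ R ∧ ∀ r ∈ R, r ≠ l → ¬(cycleDist l r ≤ k+1)
  · -- reflect and do surgery
    have h' := path_resolving_frev h
    have hrevl : frev l = z := by
      apply Fin.ext
      rw [hzv]
      show n - 1 - l.val = 0
      rw [hlv]
      omega
    have hrevz : frev z = l := by
      apply Fin.ext
      rw [hlv]
      show n - 1 - z.val = n - 1
      rw [hzv]
      omega
    obtain ⟨R', hR', hcard⟩ := glue_surgery hk hn (R.image frev) h' z l hzv hlv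
      (by rw [← hrevl]; exact Finset.mem_image_of_mem _ hc1.1)
      (by
        intro hmem
        obtain ⟨w, hw, hwe⟩ := Finset.mem_image.mp hmem
        have hwz : w = z := by
          have h2 := congrArg frev hwe
          rw [frev_invol] at h2
          rw [h2, hrevl]
        exact hc1.2.1 (hwz ▸ hw))
      (by
        intro r hr hne hcd
        obtain ⟨w, hw, hwe⟩ := Finset.mem_image.mp hr
        have hwl : w ≠ l := by
          intro hh
          subst hh
          exact hne (by rw [← hwe, hrevl])
        apply hc1.2.2 w hw hwl
        have : cycleDist z r = cycleDist l w := by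
          rw [← hwe, ← hrevl, cycleDist_frev]
        rw [← this]
        exact hcd)
    refine ⟨R', hR', ?_⟩
    rw [hcard, Finset.card_image_of_injective _ frev_inj]
  · -- R itself works on the cycle
    refine ⟨R, ?_, rfl⟩
    apply cycle_suff hk hn R h.1
    · intro u v hu hv
      apply path_nec_A h u v
      · exact fun r hr => le_trans (hu r hr) (cycleDist_le_pathDist u r)
      · exact fun r hr => le_trans (hv r hr) (cycleDist_le_pathDist v r)
    · intro r hr
      by_cases hrz : r = z
      · subst hrz
        by_cases hlR : l ∈ R
        · refine ⟨l, hlR, hnlz, ?_⟩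
          unfold cycleDist pathDist
          rw [hzv]  -- note: these rewrites may not fire; use omega with facts instead
          omega
        · have : ¬(∀ r' ∈ R, r' ≠ z → ¬(cycleDist z r' ≤ k+1)) := by
            intro hall
            exact hc0 ⟨hr, hlR, hall⟩
          push_neg at this
          obtain ⟨r', hr', hner', hcd⟩ := this
          exact ⟨r', hr', hner', hcd⟩
      · by_cases hrl : r = l
        · subst hrl
          by_cases hzR : z ∈ R
          · refine ⟨z, hzR, Ne.symm hnlz, ?_⟩
            rw [cycleDist_comm]
            unfold cycleDist pathDist
            rw [hzv]
            omega
          · have : ¬(∀ r' ∈ R, r' ≠ l → ¬(cycleDist l r' ≤ k+1)) := by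
              intro hall
              exact hc1 ⟨hr, hzR, hall⟩
            push_neg at this
            obtain ⟨r', hr', hner', hcd⟩ := this
            exact ⟨r', hr', hner', hcd⟩
        · have hr0 : r.val ≠ 0 := fun hh => hrz (Fin.ext (hh.trans hzv.symm))
          have hr1 : r.val ≠ n - 1 := fun hh => hrl (Fin.ext (hh.trans hlv.symm))
          obtain ⟨r', hr', hner', hler'⟩ := path_nec_B h r hr hr0 hr1
          exact ⟨r', hr', hner',
            le_trans (cycleDist_le_pathDist r r') hler'⟩

end Glue

/-! ### Cut : from a cycle resolving set to a path resolving set -/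

section Cut
variable {n k : ℕ}

set_option maxHeartbeats 4000000 in
lemma cut (hk : 1 ≤ k) (hn : 3*k+4 ≤ n) (R : Finset (Fin n))
    (h : IsCycleTruncResolving n k R) :
    ∃ R' : Finset (Fin n), IsPathTruncResolving n k R' ∧ R'.card = R.card := by
  have hnA := cycle_nec_A h
  have hnB := cycle_nec_B (by omega) h
  have hpos : 0 < n := by omega
  -- the gap function
  set gp : Fin n → ℕ := fun r => sInf {t | 1 ≤ t ∧ fshift r t ∈ R} with hgpdef
  have gpS : ∀ r ∈ R, 1 ≤ gp r ∧ fshift r (gp r) ∈ R := by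
    intro r hr
    have hne : {t | 1 ≤ t ∧ fshift r t ∈ R}.Nonempty := ⟨n, by omega, by rw [fshift_n]; exact hr⟩
    exact Nat.sInf_mem hne
  have gpmin : ∀ r, ∀ t, 1 ≤ t → fshift r t ∈ R → gp r ≤ t := by
    intro r t h1 h2
    exact Nat.sInf_le ⟨h1, h2⟩
  have gplt : ∀ r ∈ R, gp r ≤ n - 1 := by
    intro r hr
    obtain ⟨r', hr', hne', _⟩ := hnB r hr
    obtain ⟨s, hslt, hse⟩ := exists_shift r r'
    have hs1 : 1 ≤ s := by
      rcases Nat.eq_zero_or_pos s with h0|h0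
      · subst h0
        rw [fshift_zero] at hse
        exact (hne' hse.symm).elim
      · exact h0
    have := gpmin r s hs1 (by rw [hse]; exact hr')
    omega
  -- depth of interior points of a gap
  have gapdepth : ∀ r ∈ R, ∀ s, s ≤ gp r → ∀ r' ∈ R,
      min s (gp r - s) ≤ cycleDist (fshift r s) r' := by
    intro r hr s hs r' hr'
    obtain ⟨ρ, hρlt, hρe⟩ := exists_shift r r'
    have hcase : ρ = 0 ∨ gp r ≤ ρ := by
      rcases Nat.eq_zero_or_pos ρ with h0|h0
      · exact Or.inl h0
      · exact Or.inr (gpmin r ρ h0 (by rw [hρe]; exact hr'))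
    have hgn : gp r ≤ n - 1 := gplt r hr
    have hd : cycleDist (fshift r s) r' = cdn n s ρ := by
      rw [← hρe]
      exact cycleDist_fshift r s ρ (by omega) (by omega)
    rw [hd]
    unfold cdn
    rcases hcase with h0|h0 <;> omega
  -- maximum gap
  set γ := (R.image gp).max' ((h.1).image gp) with hγdef
  obtain ⟨a, haR, haγ⟩ : ∃ a ∈ R, gp a = γ := by
    obtain ⟨a, ha, hae⟩ := Finset.mem_image.mp (Finset.max'_mem (R.image gp) ((h.1).image gp))
    exact ⟨a, ha, hae⟩
  have hγub : ∀ r ∈ R, gp r ≤ γ := fun r hr => Finset.le_max' _ _ (Finset.mem_image_of_mem gp hr)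
  have hγ1 : 1 ≤ γ := by rw [← haγ]; exact (gpS a haR).1
  have hγn : γ ≤ n - 1 := by rw [← haγ]; exact gplt a haR
  -- γ ≤ 2k+2
  have hγle : γ ≤ 2*k + 2 := by
    by_contra hcon
    push_neg at hcon
    have hd1 : ∀ r' ∈ R, k+1 ≤ cycleDist (fshift a (k+1)) r' := by
      intro r' hr'
      have := gapdepth a haR (k+1) (by omega) r' hr'
      rw [haγ] at this
      omega
    have hd2 : ∀ r' ∈ R, k+1 ≤ cycleDist (fshift a (k+2)) r' := by
      intro r' hr'
      have := gapdepth a haR (k+2) (by omega) r' hr'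
      rw [haγ] at this
      omega
    have heq := hnA _ _ hd1 hd2
    have := fshift_inj a (by omega) (by omega) heq
    omega
  -- cut parameters
  set β := (γ - 1)/2 with hβdef
  set α := γ - 1 - β with hαdef
  have hαβ : α + β + 1 = γ := by omega
  have hαk : α ≤ k + 1 := by omega
  have hβk : β ≤ k := by omega
  have hα2 : α = k + 1 → γ = 2*k+2 := by omega
  set L := fshift a (α + 1) with hLdef
  have haL : fshift L (n - α - 1) = a := by
    rw [hLdef, fshift_add, show α + 1 + (n - α - 1) = n by omega, fshift_n]
  set Φ : Fin n → Fin n := fun x => ⟨(x.val + (n - L.val)) % n, Nat.mod_lt _ hpos⟩ with hΦdef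
  have hΦshift : ∀ t, (ht : t < n) → Φ (fshift L t) = ⟨t, ht⟩ := by
    intro t ht
    apply Fin.ext
    show ((L.val + t) % n + (n - L.val)) % n = t
    rw [Nat.mod_add_mod, show L.val + t + (n - L.val) = t + n by have := L.isLt; omega,
      Nat.add_mod_right, Nat.mod_eq_of_lt ht]
  have hLx : ∀ x : Fin n, fshift L ((Φ x).val) = x := by
    intro x
    obtain ⟨p, hplt, hpe⟩ := exists_shift L x
    rw [← hpe, hΦshift p hplt]
  have hΦinj : Function.Injective Φ := by
    intro x y hxy
    have hv := congrArg Fin.val hxy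
    have e1 : (Φ x).val = (x.val + (n - L.val)) % n := rfl
    have e2 : (Φ y).val = (y.val + (n - L.val)) % n := rfl
    have hL := L.isLt
    have m1 := mod_cases_aux (x.val + (n - L.val)) n (by have := x.isLt; omega)
    have m2 := mod_cases_aux (y.val + (n - L.val)) n (by have := y.isLt; omega)
    rw [← e1] at m1
    rw [← e2] at m2
    have := x.isLt; have := y.isLt
    exact Fin.ext (by omega)
  have hdist : ∀ x y : Fin n, cycleDist x y = cdn n (Φ x).val (Φ y).val := by
    intro x y
    conv_lhs => rw [← hLx x, ← hLx y]
    exact cycleDist_fshift L _ _ (by have := (Φ x).isLt; omega) (by have := (Φ y).isLt; omega)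
  -- landmark just after the cut
  have hbR : fshift a γ ∈ R := by
    have := (gpS a haR).2
    rwa [haγ] at this
  have hposb : (Φ (fshift a γ)).val = β := by
    have hbe : fshift a γ = fshift L β := by
      rw [hLdef, fshift_add, show α + 1 + β = γ by omega]
    rw [hbe, hΦshift β (by omega)]
  have hposa : (Φ a).val = n - 1 - α := by
    conv_lhs => rw [← haL]
    rw [hΦshift (n - α - 1) (by omega)]
    show n - α - 1 = n - 1 - α
    omega
  -- all landmarks lie in positions [β, n-1-α]
  have hposr : ∀ r ∈ R, β ≤ (Φ r).val ∧ (Φ r).val ≤ n - 1 - α := by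
    intro r hr
    obtain ⟨ρ, hρlt, hρe⟩ := exists_shift a r
    have hcase : ρ = 0 ∨ γ ≤ ρ := by
      rcases Nat.eq_zero_or_pos ρ with h0|h0
      · exact Or.inl h0
      · right
        rw [← haγ]
        exact gpmin a ρ h0 (by rw [hρe]; exact hr)
    rcases hcase with h0|h0
    · subst h0
      rw [fshift_zero] at hρe
      subst hρe
      rw [hposa]
      omega
    · have hre : r = fshift L (ρ - α - 1) := by
        rw [← hρe, hLdef, fshift_add, show α + 1 + (ρ - α - 1) = ρ by omega]
      rw [hre, hΦshift (ρ - α - 1) (by omega)]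
      constructor
      · show β ≤ ρ - α - 1
        omega
      · show ρ - α - 1 ≤ n - 1 - α
        omega
  refine ⟨R.image Φ, ?_, Finset.card_image_of_injective _ hΦinj⟩
  apply path_suff
  · exact (h.1).image Φ
  · -- invisibility condition
    intro u v hu hv
    have claim : ∀ w : Fin n, (∀ s ∈ R.image Φ, k+1 ≤ pathDist w s) →
        ∀ s ∈ R, k+1 ≤ cycleDist (fshift L w.val) s := by
      intro w hw
      by_cases hbig : w.val = n - 1 ∧ α = k + 1
      · intro s hs
        have hge := gapdepth a haR α (by omega) s hs
        rw [haγ] at hge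
        have hγ22 := hα2 hbig.2
        have hxx : fshift L w.val = fshift a α := by
          rw [hbig.1, hLdef, fshift_add,
            show α + 1 + (n - 1) = α + n by omega, fshift_mod]
        rw [hxx]
        have hb2 := hbig.2
        omega
      · intro s hs
        by_contra hcon
        push_neg at hcon
        have hpd := hw (Φ s) (Finset.mem_image_of_mem Φ hs)
        have hcd : cycleDist (fshift L w.val) s = cdn n w.val (Φ s).val := by
          conv_lhs => rw [← hLx s]
          exact cycleDist_fshift L w.val (Φ s).val (by have := w.isLt; omega)
            (by have := (Φ s).isLt; omega)
        have hq := hposr s hs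
        have hpa := hw (Φ a) (Finset.mem_image_of_mem Φ haR)
        have hpb := hw (Φ (fshift a γ)) (Finset.mem_image_of_mem Φ hbR)
        unfold pathDist at hpd hpa hpb
        rw [hposa] at hpa
        rw [hposb] at hpb
        rw [hcd] at hcon
        unfold cdn at hcon
        have hwlt := w.isLt
        have hqlt := (Φ s).isLt
        rcases (by tauto : w.val ≠ n - 1 ∨ α ≠ k + 1) with hb | hb <;> omega
    have hui := claim u hu
    have hvi := claim v hv
    have heq := hnA _ _ hui hvi
    exact Fin.ext (fshift_inj L u.isLt v.isLt heq)
  · -- buddy condition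
    intro s' hs' h0 h1
    obtain ⟨r, hrR, hre⟩ := Finset.mem_image.mp hs'
    subst hre
    by_cases hγk : γ ≤ k + 1
    · -- small gaps everywhere : next / previous landmark along the path
      set q := (Φ r).val with hqdef
      have hrL : fshift L q = r := hLx r
      have htb := gpS r hrR
      have htγ : gp r ≤ γ := hγub r hrR
      have hq := hposr r hrR
      by_cases hwrap : q + gp r ≤ n - 1
      · have hr2e : fshift r (gp r) = fshift L (q + gp r) := by
          rw [← hrL, fshift_add]
        refine ⟨Φ (fshift r (gp r)), Finset.mem_image_of_mem Φ htb.2, ?_, ?_⟩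
        · intro hh
          have h2 := hΦinj hh
          have h3 : fshift L (q + gp r) = fshift L q := by rw [← hr2e, hrL]; exact h2
          have := fshift_inj L (by omega) (by have := (Φ r).isLt; omega) h3
          omega
        · rw [hr2e, hΦshift (q + gp r) (by omega)]
          unfold pathDist
          simp only [Fin.val_mk]
          have hbridge : (r.val + (n - L.val)) % n = q := rfl
          omega
      · -- wrapping : use the previous landmark
        push_neg at hwrap
        set δ := sInf {d | 1 ≤ d ∧ fshift r (n - d) ∈ R} with hδdef
        have hδne : {d | 1 ≤ d ∧ fshift r (n - d) ∈ R}.Nonempty :=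
          ⟨n, by omega, by rw [Nat.sub_self, fshift_zero]; exact hrR⟩
        have hδS : 1 ≤ δ ∧ fshift r (n - δ) ∈ R := Nat.sInf_mem hδne
        have hδmin : ∀ d, 1 ≤ d → fshift r (n - d) ∈ R → δ ≤ d :=
          fun d h1 h2 => Nat.sInf_le ⟨h1, h2⟩
        have hδn : δ ≤ n := hδmin n (by omega) (by rw [Nat.sub_self, fshift_zero]; exact hrR)
        have hgpr0 : gp (fshift r (n - δ)) = δ := by
          have hle : gp (fshift r (n - δ)) ≤ δ := gpmin _ δ hδS.1
            (by rw [fshift_add, show n - δ + δ = n by omega, fshift_n]; exact hrR)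
          by_contra hne
          have hlt : gp (fshift r (n - δ)) < δ := by omega
          have hmem := (gpS _ hδS.2).2
          have h1le := (gpS _ hδS.2).1
          have he2 : fshift (fshift r (n - δ)) (gp (fshift r (n - δ))) =
              fshift r (n - (δ - gp (fshift r (n - δ)))) := by
            rw [fshift_add]
            congr 1
            omega
          rw [he2] at hmem
          have := hδmin (δ - gp (fshift r (n - δ))) (by omega) hmem
          omega
        have hδγ : δ ≤ γ := by rw [← hgpr0]; exact hγub _ hδS.2
        have hqδ : δ ≤ q := by omega
        have hr0e : fshift r (n - δ) = fshift L (q - δ) := by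
          rw [← hrL, fshift_add, show q + (n - δ) = (q - δ) + n by omega, fshift_mod]
        refine ⟨Φ (fshift r (n - δ)), Finset.mem_image_of_mem Φ hδS.2, ?_, ?_⟩
        · intro hh
          have h2 := hΦinj hh
          have h3 : fshift L (q - δ) = fshift L q := by rw [← hr0e, hrL]; exact h2
          have := fshift_inj L (by omega) (by have := (Φ r).isLt; omega) h3
          omega
        · rw [hr0e, hΦshift (q - δ) (by omega)]
          unfold pathDist
          simp only [Fin.val_mk]
          have hbridge : (r.val + (n - L.val)) % n = q := rfl
          omega
    · -- the cut gap is large : the cycle buddy does not cross the cut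
      push_neg at hγk
      obtain ⟨p, hpR, hpne, hpbud⟩ := hnB r hrR
      refine ⟨Φ p, Finset.mem_image_of_mem Φ hpR, fun hh => hpne (hΦinj hh), ?_⟩
      have hcd := hdist r p
      have hq1 := hposr r hrR
      have hq2 := hposr p hpR
      rw [hcd] at hpbud
      unfold cdn at hpbud
      unfold pathDist
      have := (Φ r).isLt
      have := (Φ p).isLt
      omega

end Cut

/-! ### Main theorem -/

lemma univ_path_resolving (n k : ℕ) (hn : 0 < n) :
    IsPathTruncResolving n k (Finset.univ : Finset (Fin n)) := by
  refine ⟨⟨⟨0, hn⟩, Finset.mem_univ _⟩, fun u v hcode => ?_⟩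
  have h1 := hcode u (Finset.mem_univ u)
  have hself : pathDist u u = 0 := by unfold pathDist; omega
  rw [hself] at h1
  have h2 : pathDist v u = 0 := by omega
  exact (pathDist_eq_zero' h2).symm

lemma univ_cycle_resolving (n k : ℕ) (hn : 0 < n) :
    IsCycleTruncResolving n k (Finset.univ : Finset (Fin n)) := by
  refine ⟨⟨⟨0, hn⟩, Finset.mem_univ _⟩, fun u v hcode => ?_⟩
  have h1 := hcode u (Finset.mem_univ u)
  have hself : cycleDist u u = 0 := by unfold cycleDist pathDist; omega
  rw [hself] at h1
  have h2 : cycleDist v u = 0 := by omega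
  exact (cycleDist_eq_zero' h2).symm

theorem cycleTruncDim_eq_pathTruncDim (n k : ℕ) (hk : 0 < k) (hn : 3 * k + 3 < n) :
    cycleTruncDim n k = pathTruncDim n k := by
  have hn' : 3*k+4 ≤ n := by omega
  have hk' : 1 ≤ k := hk
  have hpos : 0 < n := by omega
  have hPne : {m | ∃ R : Finset (Fin n), IsPathTruncResolving n k R ∧ R.card = m}.Nonempty :=
    ⟨n, Finset.univ, univ_path_resolving n k hpos, Finset.card_fin n⟩
  have hCne : {m | ∃ R : Finset (Fin n), IsCycleTruncResolving n k R ∧ R.card = m}.Nonempty :=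
    ⟨n, Finset.univ, univ_cycle_resolving n k hpos, Finset.card_fin n⟩
  have hPmem : pathTruncDim n k ∈
      {m | ∃ R : Finset (Fin n), IsPathTruncResolving n k R ∧ R.card = m} :=
    Nat.sInf_mem hPne
  have hCmem : cycleTruncDim n k ∈
      {m | ∃ R : Finset (Fin n), IsCycleTruncResolving n k R ∧ R.card = m} :=
    Nat.sInf_mem hCne
  obtain ⟨Rp, hRp, hRpcard⟩ := hPmem
  obtain ⟨Rc, hRc, hRccard⟩ := hCmem
  apply le_antisymm
  · obtain ⟨R', hR', hcard⟩ := glue hk' hn' Rp hRp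
    have hle : cycleTruncDim n k ≤ R'.card := Nat.sInf_le ⟨R', hR', rfl⟩
    rw [hcard, hRpcard] at hle
    exact hle
  · obtain ⟨R', hR', hcard⟩ := cut hk' hn' Rc hRc
    have hle : pathTruncDim n k ≤ R'.card := Nat.sInf_le ⟨R', hR', rfl⟩
    rw [hcard, hRccard] at hle
    exact hle
end

section
/- If G is a connected graph on n > 2 vertices that is not complete, then β_1(G) < n − 1; more precisely, there exist two vertices whose removal from V yields a 1-truncated resolving set of size n − 2. -/
open SimpleGraph

-- key triple lemma
lemma exists_triple {V : Type*} (G : SimpleGraph V) (hG : G.Connected)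
    (a b : V) (hab : a ≠ b) (hnadj : ¬ G.Adj a b) :
    ∃ u w r : V, u ≠ w ∧ u ≠ r ∧ w ≠ r ∧ truncDist G 1 u r ≠ truncDist G 1 w r := by
  obtain ⟨p, hp⟩ := hG.exists_walk_length_eq_dist a b
  match p, hp with
  | .nil, hp => exact absurd rfl hab
  | .cons (v := c) h .nil, hp => exact absurd h hnadj
  | .cons (v := c) h (.cons (v := d) h2 q), hp =>
    refine ⟨a, c, d, h.ne, ?_, h2.ne, ?_⟩
    · rintro rfl
      have := SimpleGraph.dist_le q
      simp [SimpleGraph.Walk.length_cons] at hp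
      omega
    · have hda : d ≠ a := by
        rintro rfl
        have := SimpleGraph.dist_le q
        simp [SimpleGraph.Walk.length_cons] at hp
        omega
      have hnad : ¬ G.Adj a d := by
        intro had
        have := SimpleGraph.dist_le (SimpleGraph.Walk.cons had q)
        simp [SimpleGraph.Walk.length_cons] at hp this
        omega
      have h1 : G.dist a d ≠ 0 := fun h0 =>
        hda (((hG.dist_eq_zero_iff).mp h0).symm)
      have h1' : G.dist a d ≠ 1 := fun h0 =>
        hnad ((SimpleGraph.dist_eq_one_iff_adj).mp h0)
      have : truncDist G 1 a d = 2 := by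
        unfold truncDist; omega
      have hcd : truncDist G 1 c d = 1 := by
        unfold truncDist
        rw [(SimpleGraph.dist_eq_one_iff_adj).mpr h2]
        norm_num
      omega

theorem truncDim_one_lt_of_not_complete {V : Type*} [Fintype V] (G : SimpleGraph V)
    (hG : G.Connected) (n : ℕ) (hn : Fintype.card V = n) (h2 : 2 < n)
    (hnc : ¬ ∀ u v : V, u ≠ v → G.Adj u v) :
    (∃ u w : V, u ≠ w ∧ IsTruncResolving G 1 ({u, w}ᶜ : Set V)) ∧
      truncMetricDim G 1 < n - 1 := by
  classical
  push_neg at hnc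
  obtain ⟨a, b, hab, hnadj⟩ := hnc
  obtain ⟨u, w, r, huw, hur, hwr, hd⟩ := exists_triple G hG a b hab hnadj
  set R : Finset V := ({u, w} : Finset V)ᶜ with hR
  have hcard2 : ({u, w} : Finset V).card = 2 := by
    rw [Finset.card_insert_of_notMem (by simp [huw]), Finset.card_singleton]
  have hcardR : R.card = n - 2 := by
    rw [hR, Finset.card_compl, hcard2, hn]
  have hcoe : (↑R : Set V) = ({u, w}ᶜ : Set V) := by
    rw [hR, Finset.coe_compl]; simp
  have hres : IsTruncResolving G 1 ({u, w}ᶜ : Set V) := by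
    constructor
    · have : R.Nonempty := Finset.card_pos.mp (by omega)
      obtain ⟨z, hz⟩ := this
      exact ⟨z, by rw [← hcoe]; exact_mod_cast hz⟩
    · intro x y hxy
      by_contra hne
      have key : ∀ z : V, z ≠ u → z ≠ w → truncDist G 1 x z = truncDist G 1 y z := by
        intro z h1 h2
        exact hxy z (by simp [h1, h2])
      have self : ∀ z : V, truncDist G 1 z z = 0 := by
        intro z; simp [truncDist]
      have tde : ∀ p q : V, truncDist G 1 p q = 0 → p = q := by
        intro p q h
        unfold truncDist at h
        have : G.dist p q = 0 := by omega
        exact (hG.dist_eq_zero_iff).mp this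
      have hx : x = u ∨ x = w := by
        by_contra hx
        push_neg at hx
        have h0 := key x hx.1 hx.2
        rw [self x] at h0
        exact hne (tde y x h0.symm).symm
      have hy : y = u ∨ y = w := by
        by_contra hy
        push_neg at hy
        have h0 := key y hy.1 hy.2
        rw [self y] at h0
        exact hne (tde x y h0)
      have hkr := key r hur.symm hwr.symm
      rcases hx with rfl | rfl <;> rcases hy with rfl | rfl
      · exact hne rfl
      · exact hd hkr
      · exact hd hkr.symm
      · exact hne rfl
  refine ⟨⟨u, w, huw, hres⟩, ?_⟩
  have hmem : truncMetricDim G 1 ≤ n - 2 :=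
    Nat.sInf_le ⟨R, by rw [hcoe]; exact hres, hcardR⟩
  omega
end

section
/- For any connected graph G on n vertices and k > 0, n ≤ (k+1)^{β_k(G)} + β_k(G). -/
open SimpleGraph

theorem card_le_pow_truncDim {V : Type*} [Fintype V] (G : SimpleGraph V)
    (hG : G.Connected) (n : ℕ) (hn : Fintype.card V = n) (k : ℕ) (hk : 0 < k) :
    n ≤ (k + 1) ^ truncMetricDim G k + truncMetricDim G k := by
  classical
  subst hn
  rcases isEmpty_or_nonempty V with hV | hV
  · simp [Fintype.card_eq_zero]
  · have hS : {m | ∃ R : Finset V, IsTruncResolving G k ↑R ∧ R.card = m}.Nonempty := by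
      refine ⟨(Finset.univ : Finset V).card, Finset.univ, ⟨⟨Classical.arbitrary V, by simp⟩, ?_⟩,
        rfl⟩
      intro u v h
      have h1 := h u (by simp)
      simp only [truncDist, SimpleGraph.dist_self, Nat.zero_min] at h1
      have h2 : G.dist v u = 0 := by omega
      exact ((hG.dist_eq_zero_iff).mp h2).symm
    obtain ⟨R, hR, hcard⟩ := Nat.sInf_mem hS
    have hdim : truncMetricDim G k = R.card := hcard.symm
    -- injective map from complement of R into functions
    have hinj : Function.Injective
        (fun v : {x // x ∈ Rᶜ} => fun r : ↑(R : Set V) =>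
          (⟨truncDist G k v r - 1, by
            have : truncDist G k v r ≤ k + 1 := min_le_right _ _
            omega⟩ : Fin (k + 1))) := by
      intro u v huv
      have key : ∀ r ∈ (R : Set V), truncDist G k u r = truncDist G k v r := by
        intro r hr
        have hu1 : 1 ≤ truncDist G k (u : V) r := by
          have hne : (u : V) ≠ r :=
            fun h => (Finset.mem_compl.mp u.2) (by simpa [h] using hr)
          have := hG.pos_dist_of_ne hne
          simp only [truncDist]
          omega
        have hv1 : 1 ≤ truncDist G k (v : V) r := by
          have hne : (v : V) ≠ r :=
            fun h => (Finset.mem_compl.mp v.2) (by simpa [h] using hr)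
          have := hG.pos_dist_of_ne hne
          simp only [truncDist]
          omega
        have := congrFun huv ⟨r, hr⟩
        simp only [Fin.mk.injEq] at this
        omega
      exact Subtype.ext (hR.2 u v fun r hr => key r hr)
    have hcardle : Fintype.card V ≤ (k + 1) ^ R.card + R.card := by
      simpa [Fintype.card_coe] using Fintype.card_le_of_injective _ hinj
    rw [hdim]
    exact hcardle
end

section
/- For any connected graph G on n vertices with diameter δ and any k > 0, β_k(G) ≤ β_k(P_{δ+1}) + n − (δ+1). -/
open SimpleGraph

section Helpers
variable {V : Type*} {G : SimpleGraph V}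

lemma dist_getVert_le (hG : G.Connected) {u v : V} (p : G.Walk u v) :
    ∀ i : ℕ, G.dist u (p.getVert i) ≤ i := by
  induction p with
  | nil =>
    intro i
    rw [Walk.getVert_of_length_le _ (Nat.zero_le i), SimpleGraph.dist_self]
    exact Nat.zero_le i
  | cons h q ih =>
    intro i
    cases i with
    | zero => simp
    | succ i =>
      rw [Walk.getVert_cons_succ]
      calc G.dist _ _ ≤ G.dist _ _ + G.dist _ (q.getVert i) := hG.dist_triangle
        _ ≤ 1 + i := by
            have h1 : G.dist _ _ ≤ (Walk.cons h Walk.nil).length := dist_le _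
            simp at h1
            exact Nat.add_le_add h1 (ih i)
        _ = i + 1 := Nat.add_comm _ _

lemma getVert_dist_le (hG : G.Connected) {u v : V} (p : G.Walk u v) :
    ∀ i : ℕ, G.dist (p.getVert i) v ≤ p.length - i := by
  induction p with
  | nil =>
    intro i
    rw [Walk.getVert_of_length_le _ (Nat.zero_le i)]
    simp
  | cons h q ih =>
    intro i
    cases i with
    | zero =>
      simpa using (dist_le (Walk.cons h q)).trans (by simp)
    | succ i =>
      rw [Walk.getVert_cons_succ]
      simpa using ih i

lemma dist_getVert_getVert_le (hG : G.Connected) {u v : V} (p : G.Walk u v) :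
    ∀ i j : ℕ, i ≤ j → G.dist (p.getVert i) (p.getVert j) ≤ j - i := by
  induction p with
  | nil =>
    intro i j _
    rw [Walk.getVert_of_length_le _ (Nat.zero_le i), Walk.getVert_of_length_le _ (Nat.zero_le j), SimpleGraph.dist_self]
    exact Nat.zero_le _
  | cons h q ih =>
    intro i j hij
    cases i with
    | zero => simpa using dist_getVert_le hG (Walk.cons h q) j
    | succ i =>
      cases j with
      | zero => omega
      | succ j =>
        rw [Walk.getVert_cons_succ, Walk.getVert_cons_succ]
        simpa using ih i j (by omega)

lemma dist_getVert_getVert (hG : G.Connected) {u v : V} (p : G.Walk u v)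
    (hp : p.length = G.dist u v) {i j : ℕ} (hij : i ≤ j) (hj : j ≤ p.length) :
    G.dist (p.getVert i) (p.getVert j) = j - i := by
  refine le_antisymm (dist_getVert_getVert_le hG p i j hij) ?_
  have t1 : G.dist u v ≤ G.dist u (p.getVert i) + G.dist (p.getVert i) (p.getVert j)
      + G.dist (p.getVert j) v := by
    calc G.dist u v ≤ G.dist u (p.getVert j) + G.dist (p.getVert j) v := hG.dist_triangle
      _ ≤ _ := by
          exact Nat.add_le_add_right hG.dist_triangle _
  have h1 := dist_getVert_le hG p i
  have h2 := getVert_dist_le hG p j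
  omega

end Helpers

theorem truncDim_le_path_bound {V : Type*} [Fintype V] (G : SimpleGraph V)
    (hG : G.Connected) (n : ℕ) (hn : Fintype.card V = n) (k : ℕ) (hk : 0 < k) :
    truncMetricDim G k ≤ pathTruncDim (G.diam + 1) k + (n - (G.diam + 1)) := by
  classical
  haveI : Nonempty V := hG.nonempty
  obtain ⟨u, v, huv⟩ := G.exists_dist_eq_diam
  obtain ⟨p, hp⟩ := (hG u v).exists_walk_length_eq_dist
  have hlen : p.length = G.diam := by rw [hp, huv]
  set δ := G.diam with hδ
  let f : Fin (δ + 1) → V := fun i => p.getVert i.val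
  have hdist : ∀ i j : Fin (δ + 1), G.dist (f i) (f j) = pathDist i j := by
    intro i j
    have hi := i.isLt
    have hj := j.isLt
    rcases le_total i.val j.val with h | h
    · rw [dist_getVert_getVert hG p hp h (by omega)]
      simp only [pathDist]; omega
    · rw [SimpleGraph.dist_comm, dist_getVert_getVert hG p hp h (by omega)]
      simp only [pathDist]; omega
  have hfinj : Function.Injective f := by
    intro i j hij
    have h0 := hdist i j
    rw [hij, SimpleGraph.dist_self] at h0
    have : i.val = j.val := by simp only [pathDist] at h0; omega
    exact Fin.ext this
  -- an optimal resolving set of the path exists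
  have hne : {m | ∃ R : Finset (Fin (δ + 1)), IsPathTruncResolving (δ + 1) k R ∧
      R.card = m}.Nonempty := by
    refine ⟨(Finset.univ : Finset (Fin (δ + 1))).card, Finset.univ, ⟨Finset.univ_nonempty, ?_⟩, rfl⟩
    intro a b hab
    have := hab a (Finset.mem_univ a)
    have h0 : min (pathDist a a) (k + 1) = 0 := by simp only [pathDist]; omega
    rw [h0] at this
    have : pathDist b a = 0 := by omega
    simp only [pathDist] at this
    exact Fin.ext (by omega)
  obtain ⟨R, hR, hcard⟩ := Nat.sInf_mem hne
  let S : Finset V := R.image f ∪ (Finset.univ \ Finset.univ.image f)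
  have hSres : IsTruncResolving G k ↑S := by
    constructor
    · obtain ⟨r0, hr0⟩ := hR.1
      refine ⟨f r0, ?_⟩
      simp only [S, Finset.coe_union, Set.mem_union, Finset.mem_coe]
      exact Or.inl (Finset.mem_image_of_mem f hr0)
    · intro a b hab
      have key : ∀ c : V, c ∉ Finset.univ.image f → c ∈ S := by
        intro c hc
        simp only [S, Finset.mem_union, Finset.mem_sdiff]
        exact Or.inr ⟨Finset.mem_univ c, hc⟩
      by_cases ha : a ∈ Finset.univ.image f
      · by_cases hb : b ∈ Finset.univ.image f
        · obtain ⟨i, -, hi⟩ := Finset.mem_image.mp ha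
          obtain ⟨j, -, hj⟩ := Finset.mem_image.mp hb
          subst hi hj
          refine congrArg f (hR.2 i j ?_)
          intro r hr
          have hfr : (f r : V) ∈ (↑S : Set V) := by
            simp only [S, Finset.coe_union, Set.mem_union, Finset.mem_coe]
            exact Or.inl (Finset.mem_image_of_mem f hr)
          have := hab (f r) hfr
          simpa only [truncDist, hdist i r, hdist j r] using this
        · have hbS : (b : V) ∈ (↑S : Set V) := key b hb
          have := hab b hbS
          simp only [truncDist, SimpleGraph.dist_self] at this
          have h0 : G.dist a b = 0 := by omega
          exact (hG.dist_eq_zero_iff).mp h0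
      · have haS : (a : V) ∈ (↑S : Set V) := key a ha
        have := hab a haS
        simp only [truncDist, SimpleGraph.dist_self] at this
        have h0 : G.dist b a = 0 := by omega
        exact ((hG.dist_eq_zero_iff).mp h0).symm
  have h1 : truncMetricDim G k ≤ S.card := Nat.sInf_le ⟨S, hSres, rfl⟩
  refine h1.trans ?_
  have h2 : S.card ≤ (R.image f).card + (Finset.univ \ Finset.univ.image f).card :=
    Finset.card_union_le _ _
  have h3 : (R.image f).card ≤ R.card := Finset.card_image_le
  have h4 : (Finset.univ \ Finset.univ.image f).card = n - (δ + 1) := by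
    rw [Finset.card_sdiff_of_subset (Finset.subset_univ _), Finset.card_image_of_injective _ hfinj]
    simp [hn]
  have h5 : pathTruncDim (δ + 1) k = R.card := hcard.symm
  omega
end

section
/- For any tree T on n > 2 vertices and any k ≥ 1, β_k(T) ≤ β_k(S_n) = n − 2, where S_n is the star on n vertices. -/
open SimpleGraph

/-- The star graph on `n` vertices: vertex `0` is the center, adjacent to all others. -/
def starGraph (n : ℕ) : SimpleGraph (Fin n) :=
  SimpleGraph.fromRel (fun u _ => u.val = 0)

lemma aux_dist_eq_two {V : Type*} {G : SimpleGraph V} {a c b : V} (h1 : G.Adj a c)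
    (h2 : G.Adj c b) (hab : a ≠ b) (hnadj : ¬ G.Adj a b) : G.dist a b = 2 := by
  have hle : G.dist a b ≤ 2 := by
    have := G.dist_le (Walk.cons h1 (Walk.cons h2 Walk.nil))
    simpa using this
  have h0 : 0 < G.dist a b := Reachable.pos_dist_of_ne (h1.reachable.trans h2.reachable) hab
  have h1' : G.dist a b ≠ 1 := fun h => hnadj (SimpleGraph.dist_eq_one_iff_adj.mp h)
  omega

lemma aux_acyclic_not_adj {V : Type*} {T : SimpleGraph V} (hT' : T.IsAcyclic) {a c b : V}
    (h1 : T.Adj a c) (h2 : T.Adj c b) (hab : a ≠ b) : ¬ T.Adj a b := by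
  intro h
  have hq : (Walk.cons h1 (Walk.cons h2 Walk.nil) : T.Walk a b).IsPath := by
    simp [Walk.cons_isPath_iff, hab, h1.ne, h2.ne]
  have := isAcyclic_iff_path_unique.mp hT' (Path.singleton h) ⟨_, hq⟩
  have := congrArg (fun p : T.Path a b => p.1.length) this
  simp [Path.singleton] at this

lemma aux_resolving {V : Type*} [Fintype V] [DecidableEq V] {G : SimpleGraph V}
    (hG : G.Connected) {k : ℕ} (hk : 1 ≤ k) {a c b : V} (hcb : G.Adj c b)
    (hab2 : G.dist a b = 2) (hba : b ≠ a) :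
    IsTruncResolving G k ↑(Finset.univ \ ({a, c} : Finset (V))) := by
  have hbc : b ≠ c := hcb.ne'
  have hbR : b ∈ Finset.univ \ ({a, c} : Finset V) := by simp [hba, hbc]
  constructor
  · exact ⟨b, by exact_mod_cast hbR⟩
  · intro u v h
    -- a key fact: if some vertex in the set equals u or v, we're done
    have key : ∀ w : V, w ∈ Finset.univ \ ({a, c} : Finset V) → (u = w ∨ v = w) → u = v := by
      intro w hw huv
      have hw' := h w (by exact_mod_cast hw)
      rcases huv with rfl | rfl
      · simp only [truncDist, SimpleGraph.dist_self, Nat.zero_min] at hw'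
        have : G.dist v u = 0 := by omega
        exact ((hG.dist_eq_zero_iff).mp this).symm
      · simp only [truncDist, SimpleGraph.dist_self, Nat.zero_min] at hw'
        have : G.dist u v = 0 := by omega
        exact (hG.dist_eq_zero_iff).mp this
    by_cases hu : u = a ∨ u = c
    · by_cases hv : v = a ∨ v = c
      · -- both among {a, c}: use b to distinguish a from c
        have hb := h b (by exact_mod_cast hbR)
        have hta : truncDist G k a b = 2 := by
          simp only [truncDist, hab2]
          omega
        have htc : truncDist G k c b = 1 := by
          simp only [truncDist, SimpleGraph.dist_eq_one_iff_adj.mpr hcb]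
          omega
        rcases hu with rfl | rfl <;> rcases hv with rfl | rfl <;>
          simp_all
      · push_neg at hv
        exact key v (by simp [hv]) (Or.inr rfl)
    · push_neg at hu
      exact key u (by simp [hu]) (Or.inl rfl)

lemma star_adj {n : ℕ} {u v : Fin n} :
    (_root_.starGraph n).Adj u v ↔ u ≠ v ∧ (u.val = 0 ∨ v.val = 0) := by
  simp [_root_.starGraph, or_comm]

lemma star_conn {n : ℕ} (hn : 0 < n) : (_root_.starGraph n).Connected := by
  have hz : ∀ u : Fin n, (_root_.starGraph n).Reachable u ⟨0, hn⟩ := by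
    intro u
    by_cases hu : u = ⟨0, hn⟩
    · exact hu ▸ Reachable.refl u
    · exact (star_adj.mpr ⟨hu, Or.inr rfl⟩).reachable
  rw [connected_iff]
  exact ⟨fun u v => (hz u).trans (hz v).symm, ⟨⟨0, hn⟩⟩⟩

lemma star_dist_leaf {n : ℕ} (hn : 0 < n) {u v : Fin n} (huv : u ≠ v)
    (hu : u.val ≠ 0) (hv : v.val ≠ 0) : (_root_.starGraph n).dist u v = 2 := by
  have h1 : (_root_.starGraph n).Adj u ⟨0, hn⟩ := star_adj.mpr ⟨by simp [Fin.ext_iff, hu], Or.inr rfl⟩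
  have h2 : (_root_.starGraph n).Adj (⟨0, hn⟩ : Fin n) v := star_adj.mpr ⟨by simp [Fin.ext_iff, Ne.symm hv], Or.inl rfl⟩
  exact aux_dist_eq_two h1 h2 huv (by simp [star_adj, hu, hv])

lemma star_lower {n : ℕ} (h2 : 2 < n) {k : ℕ} (hk : 1 ≤ k) (R : Finset (Fin n))
    (hR : IsTruncResolving (_root_.starGraph n) k ↑R) : n - 2 ≤ R.card := by
  have hn : 0 < n := by omega
  set z : Fin n := ⟨0, hn⟩ with hz
  set L : Finset (Fin n) := Finset.univ \ {z} with hL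
  have hcardL : L.card = n - 1 := by
    simp [hL, Finset.card_sdiff, Fintype.card_fin]
  have hsd : (L \ R).card ≤ 1 := by
    rw [Finset.card_le_one]
    intro u hu v hv
    simp only [hL, Finset.mem_sdiff, Finset.mem_univ, Finset.mem_singleton, true_and] at hu hv
    apply hR.2
    intro r hr
    have hru : r ≠ u := fun h => hu.2 (h ▸ hr)
    have hrv : r ≠ v := fun h => hv.2 (h ▸ hr)
    have huz : u.val ≠ 0 := by
      intro h; exact hu.1 (Fin.ext h)
    have hvz : v.val ≠ 0 := by
      intro h; exact hv.1 (Fin.ext h)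
    by_cases hrz : r.val = 0
    · have h1 : (_root_.starGraph n).dist u r = 1 :=
        SimpleGraph.dist_eq_one_iff_adj.mpr (star_adj.mpr ⟨hru.symm, Or.inr hrz⟩)
      have h2 : (_root_.starGraph n).dist v r = 1 :=
        SimpleGraph.dist_eq_one_iff_adj.mpr (star_adj.mpr ⟨hrv.symm, Or.inr hrz⟩)
      simp [truncDist, h1, h2]
    · have h1 : (_root_.starGraph n).dist u r = 2 := star_dist_leaf hn (Ne.symm hru) huz hrz
      have h2 : (_root_.starGraph n).dist v r = 2 := star_dist_leaf hn (Ne.symm hrv) hvz hrz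
      simp [truncDist, h1, h2]
  have hinter : (L ∩ R).card ≤ R.card := Finset.card_le_card (Finset.inter_subset_right)
  have := Finset.card_sdiff_add_card_inter L R
  omega

theorem truncDim_tree_le_star {V : Type*} [Fintype V] (T : SimpleGraph V)
    (hT : T.Connected) (hT' : T.IsAcyclic) (n : ℕ) (hn : Fintype.card V = n)
    (h2 : 2 < n) (k : ℕ) (hk : 1 ≤ k) :
    truncMetricDim T k ≤ truncMetricDim (_root_.starGraph n) k ∧
      truncMetricDim (_root_.starGraph n) k = n - 2 := by
  classical
  have hn0 : 0 < n := by omega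
  -- star dimension equals n - 2
  have hstar : truncMetricDim (_root_.starGraph n) k = n - 2 := by
    have h1n : 1 < n := by omega
    set a : Fin n := ⟨1, h1n⟩
    set c : Fin n := ⟨0, hn0⟩
    set b : Fin n := ⟨2, h2⟩
    have hcb : (_root_.starGraph n).Adj c b := star_adj.mpr ⟨by simp [a, b, c, Fin.ext_iff], Or.inl rfl⟩
    have hab2 : (_root_.starGraph n).dist a b = 2 :=
      star_dist_leaf hn0 (by simp [a, b, Fin.ext_iff]) (by simp [a]) (by simp [b])
    have hba : b ≠ a := by simp [a, b, Fin.ext_iff]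
    have hres := aux_resolving (star_conn hn0) hk hcb hab2 hba
    have hcard : (Finset.univ \ ({a, c} : Finset (Fin n))).card = n - 2 := by
      rw [Finset.card_sdiff_of_subset (Finset.subset_univ _)]
      have : ({a, c} : Finset (Fin n)).card = 2 := by
        rw [Finset.card_insert_of_notMem (by simp [a, c, Fin.ext_iff]), Finset.card_singleton]
      simp [this, Fintype.card_fin]
    apply le_antisymm
    · exact Nat.sInf_le ⟨_, hres, hcard⟩
    · have hmem : n - 2 ∈ {m | ∃ R : Finset (Fin n),
          IsTruncResolving (_root_.starGraph n) k ↑R ∧ R.card = m} := ⟨_, hres, hcard⟩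
      apply le_csInf ⟨_, hmem⟩
      rintro m ⟨R, hR, rfl⟩
      exact star_lower h2 hk R hR
  refine ⟨?_, hstar⟩
  rw [hstar]
  -- find a path of length two a - c - b in T
  obtain ⟨a, c, b, h1, h2', hab⟩ :
      ∃ a c b : V, T.Adj a c ∧ T.Adj c b ∧ a ≠ b := by
    -- first get an edge
    obtain ⟨x, y, hxy⟩ := Fintype.exists_pair_of_one_lt_card (by omega : 1 < Fintype.card V)
    obtain ⟨w, hw⟩ : ∃ w : V, T.Adj x w := by
      have := (hT.preconnected x y).some
      cases this with
      | nil => exact absurd rfl hxy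
      | cons h _ => exact ⟨_, h⟩
    -- get a third vertex
    obtain ⟨u, hu⟩ : ∃ u : V, u ∉ ({x, w} : Finset V) := by
      by_contra hcon
      push_neg at hcon
      have : (Finset.univ : Finset V) ⊆ {x, w} := fun v _ => hcon v
      have := Finset.card_le_card this
      have h2' : ({x, w} : Finset V).card ≤ 2 := Finset.card_insert_le _ _ |>.trans (by simp)
      simp [hn] at this
      omega
    simp only [Finset.mem_insert, Finset.mem_singleton, not_or] at hu
    -- a path from u to x
    obtain ⟨p, hp⟩ : ∃ p : T.Walk u x, p.IsPath :=
      ⟨_, Walk.bypass_isPath ((hT.preconnected u x).some)⟩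
    cases p with
    | nil => exact absurd rfl hu.1
    | cons h q =>
      cases q with
      | nil => exact ⟨u, x, w, h, hw, hu.2⟩
      | cons h' q' =>
        refine ⟨u, _, _, h, h', ?_⟩
        have := hp.support_nodup
        simp only [Walk.support_cons, List.nodup_cons] at this
        intro hcon
        exact this.1 (List.mem_cons.mpr (Or.inr (by subst hcon; exact q'.start_mem_support)))
  have hnadj : ¬ T.Adj a b := aux_acyclic_not_adj hT' h1 h2' hab
  have hab2 : T.dist a b = 2 := aux_dist_eq_two h1 h2' hab hnadj
  have hres := aux_resolving hT hk h2' hab2 hab.symm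
  have hcard : (Finset.univ \ ({a, c} : Finset V)).card = n - 2 := by
    rw [Finset.card_sdiff_of_subset (Finset.subset_univ _)]
    have : ({a, c} : Finset V).card = 2 := by
      rw [Finset.card_insert_of_notMem (by simp [h1.ne]), Finset.card_singleton]
    simp [this, hn]
  exact Nat.sInf_le ⟨_, hres, hcard⟩
end

section
/- For k > 0 and n ≥ 1 with m = ⌊n/(3k+2)⌋ and n mod (3k+2) ∈ {0,1}, the set R = {v_i : i ≤ (3k+2)m and i mod (3k+2) ∈ {k+1, 2(k+1)}} (adding v_n if n=1) is a k-truncated resolving set of P_n of size 2m; hence β_k(P_n) ≤ 2m in this case. -/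
lemma distKey {k u v w : ℕ} (hk : 0 < k) (hw1 : w ≤ u) (hw2 : u < w + (3*k+2)) (huv : u < v)
    (e1 : min (max u (w+k) - min u (w+k)) (k+1) = min (max v (w+k) - min v (w+k)) (k+1))
    (e2 : min (max u (w+(2*k+1)) - min u (w+(2*k+1))) (k+1)
        = min (max v (w+(2*k+1)) - min v (w+(2*k+1))) (k+1)) : False := by
  omega

lemma memRaux (n k j c : ℕ) (hk : 0 < k) (hj : j < n / (3*k+2))
    (hc : c = k + 1 ∨ c = 2*(k+1)) :
    (3*k+2)*j + c ≤ (3*k+2)*(n/(3*k+2)) ∧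
    (((3*k+2)*j + c) % (3*k+2) = k+1 ∨ ((3*k+2)*j + c) % (3*k+2) = 2*(k+1)) := by
  have h1 : (3*k+2)*(j+1) ≤ (3*k+2)*(n/(3*k+2)) := Nat.mul_le_mul_left _ (by omega)
  have h1' : (3*k+2)*(j+1) = (3*k+2)*j + (3*k+2) := by ring
  have h2 : ((3*k+2)*j + c) % (3*k+2) = c % (3*k+2) := Nat.mul_add_mod _ _ _
  have h3 : c % (3*k+2) = c := Nat.mod_eq_of_lt (by omega)
  exact ⟨by omega, by omega⟩

lemma block_eq {q x y c c' : ℕ} (hc : c < q) (hc' : c' < q) (h : q*x + c = q*y + c') :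
    x = y ∧ c = c' := by
  have hq : 0 < q := by omega
  have h1 : (q*x + c) / q = x := by
    rw [Nat.mul_add_div hq, Nat.div_eq_of_lt hc]
    omega
  have h2 : (q*y + c') / q = y := by
    rw [Nat.mul_add_div hq, Nat.div_eq_of_lt hc']
    omega
  have hx : x = y := by rw [← h1, ← h2, h]
  subst hx
  exact ⟨rfl, by omega⟩

theorem pathTruncDim_upper_construction (n k : ℕ) (hk : 0 < k) (hn : 0 < n)
    (hmod : n % (3 * k + 2) = 0 ∨ n % (3 * k + 2) = 1) :
    ∀ R : Finset (Fin n),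
      R = (Finset.univ.filter (fun i : Fin n =>
            (i.val + 1 ≤ (3 * k + 2) * (n / (3 * k + 2)) ∧
              ((i.val + 1) % (3 * k + 2) = k + 1 ∨
                (i.val + 1) % (3 * k + 2) = 2 * (k + 1))) ∨
            (n = 1 ∧ i.val + 1 = n))) →
      IsPathTruncResolving n k R ∧
        (n ≠ 1 → R.card = 2 * (n / (3 * k + 2)) ∧
          pathTruncDim n k ≤ 2 * (n / (3 * k + 2))) := by
  intro R hR
  have hdm : (3*k+2) * (n / (3*k+2)) = n ∨ (3*k+2) * (n / (3*k+2)) + 1 = n := by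
    have h0 := Nat.div_add_mod n (3*k+2)
    rcases hmod with h | h
    · left; omega
    · right; omega
  have hqm_le : (3*k+2) * (n / (3*k+2)) ≤ n := Nat.mul_div_le n (3*k+2)
  have hmem : ∀ i : Fin n, i ∈ R ↔
      ((i.val + 1 ≤ (3*k+2) * (n / (3*k+2)) ∧
        ((i.val + 1) % (3*k+2) = k + 1 ∨ (i.val + 1) % (3*k+2) = 2 * (k + 1))) ∨
       (n = 1 ∧ i.val + 1 = n)) := by
    intro i
    simp only [hR, Finset.mem_filter, Finset.mem_univ, true_and]
  have hmem' : ∀ (x : ℕ) (hx : x < n), (⟨x, hx⟩ : Fin n) ∈ R ↔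
      ((x + 1 ≤ (3*k+2) * (n / (3*k+2)) ∧
        ((x + 1) % (3*k+2) = k + 1 ∨ (x + 1) % (3*k+2) = 2 * (k + 1))) ∨
       (n = 1 ∧ x + 1 = n)) := fun x hx => hmem ⟨x, hx⟩
  have hres : IsPathTruncResolving n k R := by
    constructor
    · by_cases h1 : n = 1
      · exact ⟨⟨0, hn⟩, (hmem' 0 hn).mpr (Or.inr ⟨h1, by omega⟩)⟩
      · have hm1 : 1 ≤ n / (3*k+2) := by
          rcases Nat.eq_zero_or_pos (n / (3*k+2)) with h | h
          · rw [h] at hdm; omega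
          · exact h
        have hqm : (3*k+2) ≤ (3*k+2) * (n / (3*k+2)) :=
          Nat.le_mul_of_pos_right _ hm1
        have hkn : k < n := by omega
        exact ⟨⟨k, hkn⟩, (hmem' k hkn).mpr
          (Or.inl ⟨by omega, Or.inl (Nat.mod_eq_of_lt (by omega))⟩)⟩
    · have key : ∀ u v : Fin n, u.val < v.val →
          (∀ r ∈ R, min (pathDist u r) (k + 1) = min (pathDist v r) (k + 1)) → False := by
        intro u v huv h
        have hun : u.val < (3*k+2) * (n / (3*k+2)) := by omega
        have hdu := Nat.div_add_mod u.val (3*k+2)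
        have humod : u.val % (3*k+2) < 3*k+2 := Nat.mod_lt _ (by omega)
        have hjm : u.val / (3*k+2) < n / (3*k+2) := by
          by_contra hc
          push_neg at hc
          have := Nat.mul_le_mul_left (3*k+2) hc
          omega
        have hwm : (3*k+2) * (u.val / (3*k+2) + 1) ≤ (3*k+2) * (n / (3*k+2)) :=
          Nat.mul_le_mul_left _ hjm
        have hwm' : (3*k+2) * (u.val / (3*k+2) + 1)
            = (3*k+2) * (u.val / (3*k+2)) + (3*k+2) := by ring
        have hr1n : (3*k+2) * (u.val / (3*k+2)) + k < n := by omega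
        have hr2n : (3*k+2) * (u.val / (3*k+2)) + (2*k+1) < n := by omega
        have hmem1 := memRaux n k (u.val / (3*k+2)) (k+1) hk hjm (Or.inl rfl)
        have hmem2 := memRaux n k (u.val / (3*k+2)) (2*(k+1)) hk hjm (Or.inr rfl)
        have e1 : (3*k+2) * (u.val / (3*k+2)) + k + 1
            = (3*k+2) * (u.val / (3*k+2)) + (k+1) := by ring
        have e2 : (3*k+2) * (u.val / (3*k+2)) + (2*k+1) + 1
            = (3*k+2) * (u.val / (3*k+2)) + 2*(k+1) := by ring
        have h1 := h ⟨(3*k+2) * (u.val / (3*k+2)) + k, hr1n⟩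
          ((hmem' _ hr1n).mpr (Or.inl ⟨by omega, by rw [e1]; exact hmem1.2⟩))
        have h2 := h ⟨(3*k+2) * (u.val / (3*k+2)) + (2*k+1), hr2n⟩
          ((hmem' _ hr2n).mpr (Or.inl ⟨by omega, by rw [e2]; exact hmem2.2⟩))
        have h1' : min (max u.val ((3*k+2) * (u.val / (3*k+2)) + k)
              - min u.val ((3*k+2) * (u.val / (3*k+2)) + k)) (k+1)
            = min (max v.val ((3*k+2) * (u.val / (3*k+2)) + k)
              - min v.val ((3*k+2) * (u.val / (3*k+2)) + k)) (k+1) := h1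
        have h2' : min (max u.val ((3*k+2) * (u.val / (3*k+2)) + (2*k+1))
              - min u.val ((3*k+2) * (u.val / (3*k+2)) + (2*k+1))) (k+1)
            = min (max v.val ((3*k+2) * (u.val / (3*k+2)) + (2*k+1))
              - min v.val ((3*k+2) * (u.val / (3*k+2)) + (2*k+1))) (k+1) := h2
        exact distKey hk (by omega) (by omega) huv h1' h2'
      intro u v h
      rcases lt_trichotomy u.val v.val with hlt | heq | hgt
      · exact absurd h (fun h => key u v hlt h)
      · exact Fin.ext heq
      · exact absurd h (fun h => key v u hgt (fun r hr => (h r hr).symm))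
  refine ⟨hres, ?_⟩
  intro hn1
  have hm1 : 1 ≤ n / (3*k+2) := by
    rcases Nat.eq_zero_or_pos (n / (3*k+2)) with h | h
    · rw [h] at hdm; omega
    · exact h
  have hcard : R.card = 2 * (n / (3*k+2)) := by
    rw [show R.card = (Finset.range (2 * (n / (3*k+2)))).card from ?_, Finset.card_range]
    symm
    apply Finset.card_bij (fun a ha =>
      (⟨(3*k+2) * (a/2) + (if a % 2 = 0 then k else 2*k+1), by
        have ha' : a < 2 * (n / (3*k+2)) := Finset.mem_range.mp ha
        have h2 : a/2 + 1 ≤ n / (3*k+2) := by omega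
        have := Nat.mul_le_mul_left (3*k+2) h2
        have e : (3*k+2) * (a/2 + 1) = (3*k+2) * (a/2) + (3*k+2) := by ring
        split <;> omega⟩ : Fin n))
    · intro a ha
      have ha' : a < 2 * (n / (3*k+2)) := Finset.mem_range.mp ha
      have hj : a/2 < n / (3*k+2) := by omega
      refine (hmem' _ _).mpr (Or.inl ?_)
      rcases Nat.even_or_odd a with he | ho
      · have h0 : a % 2 = 0 := Nat.even_iff.mp he
        have hx := memRaux n k (a/2) (k+1) hk hj (Or.inl rfl)
        rw [if_pos h0]
        have e : (3*k+2) * (a/2) + k + 1 = (3*k+2) * (a/2) + (k+1) := by ring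
        rw [e]
        exact hx
      · have h0 : ¬ (a % 2 = 0) := by
          have := Nat.odd_iff.mp ho; omega
        have hx := memRaux n k (a/2) (2*(k+1)) hk hj (Or.inr rfl)
        rw [if_neg h0]
        have e : (3*k+2) * (a/2) + (2*k+1) + 1 = (3*k+2) * (a/2) + 2*(k+1) := by ring
        rw [e]
        exact hx
    · intro a ha b hb hab
      have hval : (3*k+2) * (a/2) + (if a % 2 = 0 then k else 2*k+1)
          = (3*k+2) * (b/2) + (if b % 2 = 0 then k else 2*k+1) :=
        congrArg Fin.val hab
      have hba := block_eq (q := 3*k+2)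
        (c := if a % 2 = 0 then k else 2*k+1) (c' := if b % 2 = 0 then k else 2*k+1)
        (by split <;> omega) (by split <;> omega) hval
      rcases hba with ⟨h1, h2⟩
      split_ifs at h2 <;> omega
    · intro b hb
      rw [hmem] at hb
      rcases hb with ⟨hle, hm⟩ | ⟨h1, _⟩
      · have hdb := Nat.div_add_mod (b.val + 1) (3*k+2)
        rcases hm with hm | hm
        · have hbv : b.val = (3*k+2) * ((b.val + 1) / (3*k+2)) + k := by omega
          have hjlt : (b.val + 1) / (3*k+2) < n / (3*k+2) := by
            by_contra hc
            push_neg at hc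
            have := Nat.mul_le_mul_left (3*k+2) hc
            omega
          refine ⟨2*((b.val + 1) / (3*k+2)), Finset.mem_range.mpr (by omega), ?_⟩
          apply Fin.ext
          show (3*k+2) * ((2*((b.val + 1) / (3*k+2)))/2)
              + (if (2*((b.val + 1) / (3*k+2))) % 2 = 0 then k else 2*k+1) = b.val
          have e1 : (2*((b.val + 1) / (3*k+2))) % 2 = 0 := by omega
          have e2 : (2*((b.val + 1) / (3*k+2))) / 2 = (b.val + 1) / (3*k+2) := by omega
          rw [if_pos e1, e2]
          omega
        · have hbv : b.val = (3*k+2) * ((b.val + 1) / (3*k+2)) + (2*k+1) := by omega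
          have hjlt : (b.val + 1) / (3*k+2) < n / (3*k+2) := by
            by_contra hc
            push_neg at hc
            have := Nat.mul_le_mul_left (3*k+2) hc
            omega
          refine ⟨2*((b.val + 1) / (3*k+2))+1, Finset.mem_range.mpr (by omega), ?_⟩
          apply Fin.ext
          show (3*k+2) * ((2*((b.val + 1) / (3*k+2))+1)/2)
              + (if (2*((b.val + 1) / (3*k+2))+1) % 2 = 0 then k else 2*k+1) = b.val
          have e1 : ¬ ((2*((b.val + 1) / (3*k+2))+1) % 2 = 0) := by omega
          have e2 : (2*((b.val + 1) / (3*k+2))+1) / 2 = (b.val + 1) / (3*k+2) := by omega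
          rw [if_neg e1, e2]
          omega
      · exact absurd h1 hn1
  refine ⟨hcard, ?_⟩
  exact Nat.sInf_le ⟨R, hres, hcard⟩
end

section
/- For k ≥ 1 and a connected graph G on n ≥ 4 vertices whose diameter exceeds 2 and which is not isomorphic to P_4, β_k(G) ≤ n − 3. -/
open SimpleGraph

/-- On any walk, the distance from the `i`-th vertex to the end is at most `length - i`. -/
lemma dist_getVert_right_le {V : Type*} {G : SimpleGraph V} :
    ∀ {u v : V} (p : G.Walk u v) (i : ℕ), G.dist (p.getVert i) v ≤ p.length - i := by
  intro u v p
  induction p with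
  | nil => intro i; simp [SimpleGraph.Walk.getVert]
  | cons h q ih =>
    intro i
    cases i with
    | zero =>
      simpa using SimpleGraph.dist_le (SimpleGraph.Walk.cons h q)
    | succ i =>
      rw [SimpleGraph.Walk.getVert_cons_succ]
      simpa using ih i

/-- If `w` is adjacent to `x` but at distance `≥ 2` from `y`, it separates them
in truncated distance (provided `k ≥ 1`). -/
lemma trunc_ne_of_adj {V : Type*} {G : SimpleGraph V} {k : ℕ} (hk : 1 ≤ k) {x y w : V}
    (hxw : G.Adj x w) (hyw : 2 ≤ G.dist y w) :
    truncDist G k x w ≠ truncDist G k y w := by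
  have h1 : G.dist x w = 1 := SimpleGraph.dist_eq_one_iff_adj.mpr hxw
  unfold truncDist
  omega

/-- Removing a suitable triple of vertices yields a truncated resolving set. -/
lemma truncDim_le_of_triple {V : Type*} [Fintype V] (G : SimpleGraph V) (hG : G.Connected)
    (k : ℕ) (a b c : V) (hab : a ≠ b) (hac : a ≠ c) (hbc : b ≠ c)
    (h4 : 4 ≤ Fintype.card V)
    (H1 : ∃ w, w ≠ a ∧ w ≠ b ∧ w ≠ c ∧ truncDist G k a w ≠ truncDist G k b w)
    (H2 : ∃ w, w ≠ a ∧ w ≠ b ∧ w ≠ c ∧ truncDist G k a w ≠ truncDist G k c w)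
    (H3 : ∃ w, w ≠ a ∧ w ≠ b ∧ w ≠ c ∧ truncDist G k b w ≠ truncDist G k c w) :
    truncMetricDim G k ≤ Fintype.card V - 3 := by
  classical
  set R : Finset V := Finset.univ \ {a, b, c} with hR
  have hmem : ∀ x : V, x ∈ R ↔ (x ≠ a ∧ x ≠ b ∧ x ≠ c) := by
    intro x; simp [hR, and_assoc]
  have hcard3 : ({a, b, c} : Finset V).card = 3 := by
    rw [Finset.card_insert_of_notMem (by simp [hab, hac]),
      Finset.card_insert_of_notMem (by simp [hbc]), Finset.card_singleton]
  have hRcard : R.card = Fintype.card V - 3 := by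
    rw [hR, Finset.card_sdiff_of_subset (Finset.subset_univ _), Finset.card_univ, hcard3]
  apply Nat.sInf_le
  refine ⟨R, ⟨?_, ?_⟩, hRcard⟩
  · have : 0 < R.card := by omega
    obtain ⟨x, hx⟩ := Finset.card_pos.mp this
    exact ⟨x, by simpa using hx⟩
  · intro u v h
    have h' : ∀ r : V, r ∈ R → truncDist G k u r = truncDist G k v r := by
      intro r hr; exact h r (by simpa using hr)
    -- if a vertex is in R, it resolves itself
    have self_resolve : ∀ u v : V, (∀ r : V, r ∈ R →
        truncDist G k u r = truncDist G k v r) → u ∈ R → u = v := by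
      intro u v h hu
      have h0 : truncDist G k u u = 0 := by
        unfold truncDist; simp [SimpleGraph.dist_self]
      have h1 : truncDist G k v u = 0 := by rw [← h u hu, h0]
      have : G.dist v u = 0 := by
        unfold truncDist at h1; omega
      exact (hG.dist_eq_zero_iff.mp this).symm
    by_cases hu : u ∈ R
    · exact self_resolve u v h' hu
    by_cases hv : v ∈ R
    · exact (self_resolve v u (fun r hr => (h' r hr).symm) hv).symm
    rw [hmem] at hu hv
    push_neg at hu hv
    have hu' : u = a ∨ u = b ∨ u = c := by tauto
    have hv' : v = a ∨ v = b ∨ v = c := by tauto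
    obtain ⟨w1, hw1a, hw1b, hw1c, hw1⟩ := H1
    obtain ⟨w2, hw2a, hw2b, hw2c, hw2⟩ := H2
    obtain ⟨w3, hw3a, hw3b, hw3c, hw3⟩ := H3
    have hm1 : w1 ∈ R := (hmem w1).mpr ⟨hw1a, hw1b, hw1c⟩
    have hm2 : w2 ∈ R := (hmem w2).mpr ⟨hw2a, hw2b, hw2c⟩
    have hm3 : w3 ∈ R := (hmem w3).mpr ⟨hw3a, hw3b, hw3c⟩
    rcases hu' with rfl | rfl | rfl <;> rcases hv' with rfl | rfl | rfl
    · rfl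
    · exact absurd (h' w1 hm1) hw1
    · exact absurd (h' w2 hm2) hw2
    · exact absurd (h' w1 hm1).symm hw1
    · rfl
    · exact absurd (h' w3 hm3) hw3
    · exact absurd (h' w2 hm2).symm hw2
    · exact absurd (h' w3 hm3).symm hw3
    · rfl

set_option maxHeartbeats 1000000 in
theorem truncDim_le_of_diam_gt_two {V : Type*} [Fintype V] (G : SimpleGraph V)
    (hG : G.Connected) (n : ℕ) (hn : Fintype.card V = n) (h4 : 4 ≤ n)
    (hd : 2 < G.diam) (hP4 : IsEmpty (G ≃g SimpleGraph.pathGraph 4))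
    (k : ℕ) (hk : 1 ≤ k) :
    truncMetricDim G k ≤ n - 3 := by
  classical
  subst hn
  have hne : Nonempty V := Fintype.card_pos_iff.mp (by omega)
  obtain ⟨a, v0, huv⟩ := G.exists_dist_eq_diam
  have hD : 3 ≤ G.dist a v0 := by omega
  obtain ⟨p, hp⟩ := hG.exists_walk_length_eq_dist a v0
  obtain ⟨b, hbdef⟩ : ∃ x : V, p.getVert 1 = x := ⟨_, rfl⟩
  obtain ⟨c, hcdef⟩ : ∃ x : V, p.getVert 2 = x := ⟨_, rfl⟩
  obtain ⟨e, hedef⟩ : ∃ x : V, p.getVert 3 = x := ⟨_, rfl⟩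
  have hlen : 3 ≤ p.length := by omega
  have hab : G.Adj a b := by
    rw [← hbdef]
    have := p.adj_getVert_succ (i := 0) (by omega)
    simpa using this
  have hbc : G.Adj b c := by
    rw [← hbdef, ← hcdef]; exact p.adj_getVert_succ (by omega)
  have hce : G.Adj c e := by
    rw [← hcdef, ← hedef]; exact p.adj_getVert_succ (by omega)
  -- distance facts
  have hcv : G.dist c v0 ≤ p.length - 2 := by
    rw [← hcdef]; exact dist_getVert_right_le p 2
  have hev : G.dist e v0 ≤ p.length - 3 := by
    rw [← hedef]; exact dist_getVert_right_le p 3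
  have hdab : G.dist a b = 1 := SimpleGraph.dist_eq_one_iff_adj.mpr hab
  have hac2 : 2 ≤ G.dist a c := by
    have := hG.dist_triangle (u := a) (v := c) (w := v0)
    omega
  have hae3 : 3 ≤ G.dist a e := by
    have := hG.dist_triangle (u := a) (v := e) (w := v0)
    omega
  have hbe2 : 2 ≤ G.dist b e := by
    have := hG.dist_triangle (u := a) (v := b) (w := e)
    omega
  -- distinctness
  have ne_ab : a ≠ b := hab.ne
  have ne_bc : b ≠ c := hbc.ne
  have ne_ce : c ≠ e := hce.ne
  have ne_ac : a ≠ c := by rintro rfl; simp [SimpleGraph.dist_self] at hac2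
  have ne_ae : a ≠ e := by rintro rfl; simp [SimpleGraph.dist_self] at hae3
  have ne_be : b ≠ e := by rintro rfl; simp [SimpleGraph.dist_self] at hbe2
  -- symmetric distances
  have hca2 : 2 ≤ G.dist c a := by rwa [SimpleGraph.dist_comm]
  have hea3 : 3 ≤ G.dist e a := by rwa [SimpleGraph.dist_comm]
  have heb2 : 2 ≤ G.dist e b := by rwa [SimpleGraph.dist_comm]
  have hae2 : 2 ≤ G.dist a e := by omega
  have hea2 : 2 ≤ G.dist e a := by omega
  -- Case on the four candidate triples.
  by_cases Q1 : ∃ w, w ≠ a ∧ w ≠ b ∧ w ≠ e ∧ truncDist G k b w ≠ truncDist G k e w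
  · -- triple {a, b, e}
    refine truncDim_le_of_triple G hG k a b e ne_ab ne_ae ne_be (by omega) ?_ ?_ Q1
    · exact ⟨c, ne_ac.symm, ne_bc.symm, ne_ce,
        (trunc_ne_of_adj hk hbc hac2).symm⟩
    · exact ⟨c, ne_ac.symm, ne_bc.symm, ne_ce,
        (trunc_ne_of_adj hk hce.symm hac2).symm⟩
  by_cases Q2 : ∃ w, w ≠ a ∧ w ≠ c ∧ w ≠ e ∧ truncDist G k a w ≠ truncDist G k c w
  · -- triple {a, c, e}
    refine truncDim_le_of_triple G hG k a c e ne_ac ne_ae ne_ce (by omega) Q2 ?_ ?_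
    · exact ⟨b, ne_ab.symm, ne_bc, ne_be,
        trunc_ne_of_adj hk hab heb2⟩
    · exact ⟨b, ne_ab.symm, ne_bc, ne_be,
        trunc_ne_of_adj hk hbc.symm heb2⟩
  by_cases Q3 : ∃ w, w ≠ a ∧ w ≠ b ∧ w ≠ c ∧ truncDist G k a w ≠ truncDist G k b w
  · -- triple {a, b, c}
    refine truncDim_le_of_triple G hG k a b c ne_ab ne_ac ne_bc (by omega) Q3 ?_ ?_
    · exact ⟨e, ne_ae.symm, ne_be.symm, ne_ce.symm,
        (trunc_ne_of_adj hk hce hae2).symm⟩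
    · exact ⟨e, ne_ae.symm, ne_be.symm, ne_ce.symm,
        (trunc_ne_of_adj hk hce hbe2).symm⟩
  by_cases Q4 : ∃ w, w ≠ b ∧ w ≠ c ∧ w ≠ e ∧ truncDist G k c w ≠ truncDist G k e w
  · -- triple {b, c, e}
    refine truncDim_le_of_triple G hG k b c e ne_bc ne_be ne_ce (by omega) ?_ ?_ Q4
    · exact ⟨a, ne_ab, ne_ac, ne_ae,
        trunc_ne_of_adj hk hab.symm hca2⟩
    · exact ⟨a, ne_ab, ne_ac, ne_ae,
        trunc_ne_of_adj hk hab.symm hea2⟩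
  -- All triples fail: every vertex outside {a,b,c,e} is adjacent to none of them.
  exfalso
  push_neg at Q1 Q2 Q3 Q4
  have hout : ∀ w : V, w ≠ a → w ≠ b → w ≠ c → w ≠ e →
      ¬G.Adj a w ∧ ¬G.Adj b w ∧ ¬G.Adj c w ∧ ¬G.Adj e w := by
    intro w hwa hwb hwc hwe
    have e1 : truncDist G k b w = truncDist G k e w := Q1 w hwa hwb hwe
    have e2 : truncDist G k a w = truncDist G k c w := Q2 w hwa hwc hwe
    have e3 : truncDist G k a w = truncDist G k b w := Q3 w hwa hwb hwc
    have e4 : truncDist G k c w = truncDist G k e w := Q4 w hwb hwc hwe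
    have hda : G.dist a w ≠ 0 := fun h0 => hwa (hG.dist_eq_zero_iff.mp h0).symm
    have h2le : 2 ≤ truncDist G k a w := by
      by_contra hlt
      have hda1 : G.dist a w = 1 := by unfold truncDist at hlt; omega
      have hte : truncDist G k e w = 1 := by
        rw [← e1, ← e3]; unfold truncDist; omega
      have hde1 : G.dist e w = 1 := by unfold truncDist at hte; omega
      have tri := hG.dist_triangle (u := a) (v := w) (w := e)
      rw [SimpleGraph.dist_comm (u := w)] at tri
      omega
    have key : ∀ x : V, truncDist G k x w = truncDist G k a w → ¬G.Adj x w := by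
      intro x hx hadj
      have h1 : G.dist x w = 1 := SimpleGraph.dist_eq_one_iff_adj.mpr hadj
      unfold truncDist at hx h2le
      omega
    exact ⟨key a rfl, key b e3.symm, key c e2.symm, key e (e3.trans e1).symm⟩
  by_cases hfull : ∀ x : V, x = a ∨ x = b ∨ x = c ∨ x = e
  · -- G is the path a-b-c-e, hence isomorphic to P₄.
    have hnac : ¬G.Adj a c := fun h => by
      have := SimpleGraph.dist_eq_one_iff_adj.mpr h; omega
    have hnae : ¬G.Adj a e := fun h => by
      have := SimpleGraph.dist_eq_one_iff_adj.mpr h; omega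
    have hnbe : ¬G.Adj b e := fun h => by
      have := SimpleGraph.dist_eq_one_iff_adj.mpr h; omega
    have hnca : ¬G.Adj c a := fun h => hnac h.symm
    have hnea : ¬G.Adj e a := fun h => hnae h.symm
    have hneb : ¬G.Adj e b := fun h => hnbe h.symm
    have hba : G.Adj b a := hab.symm
    have hcb : G.Adj c b := hbc.symm
    have hec : G.Adj e c := hce.symm
    have hnaa : ¬G.Adj a a := G.irrefl
    have hnbb : ¬G.Adj b b := G.irrefl
    have hncc : ¬G.Adj c c := G.irrefl
    have hnee : ¬G.Adj e e := G.irrefl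
    let f : Fin 4 → V := ![a, b, c, e]
    let g : V → Fin 4 := fun x => if x = a then 0 else if x = b then 1 else if x = c then 2 else 3
    have hgf : ∀ i : Fin 4, g (f i) = i := by
      intro i
      fin_cases i <;>
        simp [f, g, ne_ab, ne_ac, ne_ae, ne_bc, ne_be, ne_ce,
          ne_ab.symm, ne_ac.symm, ne_ae.symm, ne_bc.symm, ne_be.symm, ne_ce.symm]
    have hfg : ∀ x : V, f (g x) = x := by
      intro x
      rcases hfull x with rfl | rfl | rfl | rfl <;>
        simp [f, g, ne_ab, ne_ac, ne_ae, ne_bc, ne_be, ne_ce,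
          ne_ab.symm, ne_ac.symm, ne_ae.symm, ne_bc.symm, ne_be.symm, ne_ce.symm]
    let φ : Fin 4 ≃ V := ⟨f, g, hgf, hfg⟩
    have hiso : SimpleGraph.pathGraph 4 ≃g G := by
      refine ⟨φ, ?_⟩
      intro i j
      show G.Adj (f i) (f j) ↔ (SimpleGraph.pathGraph 4).Adj i j
      fin_cases i <;> fin_cases j <;>
        simp [f, SimpleGraph.pathGraph_adj, hab, hbc, hce, hba, hcb, hec,
          hnac, hnae, hnbe, hnca, hnea, hneb, hnaa, hnbb, hncc, hnee] <;> decide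
    exact hP4.false hiso.symm
  · push_neg at hfull
    obtain ⟨x, hxa, hxb, hxc, hxe⟩ := hfull
    let S : Set V := {v | v ≠ a ∧ v ≠ b ∧ v ≠ c ∧ v ≠ e}
    have hxS : x ∈ S := ⟨hxa, hxb, hxc, hxe⟩
    have haS : a ∉ S := fun h => h.1 rfl
    obtain ⟨q⟩ := hG.preconnected x a
    obtain ⟨d, _, hdS, hdS'⟩ := q.exists_boundary_dart S hxS haS
    have hd := d.adj
    simp only [S, Set.mem_setOf_eq, not_and_or, not_not] at hdS'
    obtain ⟨h1, h2, h3, h4'⟩ := hdS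
    rcases hdS' with h5 | h5 | h5 | h5 <;> rw [h5] at hd
    · exact (hout d.fst h1 h2 h3 h4').1 hd.symm
    · exact (hout d.fst h1 h2 h3 h4').2.1 hd.symm
    · exact (hout d.fst h1 h2 h3 h4').2.2.1 hd.symm
    · exact (hout d.fst h1 h2 h3 h4').2.2.2 hd.symm
end
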